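/- arXiv:2408.03924 — 4 statements merged into one kernel-verified Lean document; each statement's English description precedes it below -/
import Mathlib

section
/- Convolution lemma for divided differences of the exponential: for every integer q ≥ 1, every index j with 0 ≤ j ≤ q−1, every tuple (x_0, …, x_q) of real numbers and every real β, one has ∫_0^β e^{-τ[x_{j+1}, …, x_q]} · e^{-(β−τ)[x_0, …, x_j]} dτ = − e^{-β[x_0, …, x_q]}. -/
open scoped BigOperators

/-- Complete homogeneous symmetric polynomial of degree `m` in the entries of the list `l`:
`h_m(x_0, …, x_q) = Σ_{k_0+⋯+k_q = m} x_0^{k_0}⋯x_q^{k_q}` (with `h_0 = 1`). -/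
noncomputable def hsymm (l : List ℝ) (m : ℕ) : ℝ :=
  ∑ k ∈ Finset.Nat.antidiagonalTuple l.length m, ∏ i : Fin l.length, l.get i ^ k i

/-- Divided difference of the exponential `e^{t[x_0, …, x_q]}` over the tuple given by the
list `l` (of length `q+1`), defined by its (absolutely convergent) series
`Σ_{m=0}^∞ (t^{q+m}/(q+m)!) · h_m(x_0, …, x_q)`; by convention it is `0` on the empty tuple. -/
noncomputable def dde (t : ℝ) (l : List ℝ) : ℝ :=
  if l.length = 0 then 0
  else ∑' m : ℕ, t ^ (l.length - 1 + m) / (Nat.factorial (l.length - 1 + m)) * hsymm l m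

/-- The sub-tuple `[x_a, …, x_b]` of the sequence `x`, as a list (empty if `b < a`). -/
def seg (x : ℕ → ℝ) (a b : ℕ) : List ℝ :=
  (List.range (b + 1 - a)).map (fun i => x (a + i))


lemma hsymm_nil (m : ℕ) : hsymm [] m = if m = 0 then 1 else 0 := by
  rcases m with _ | m
  · simp [hsymm, Finset.Nat.antidiagonalTuple_zero_zero]
  · simp [hsymm, Finset.Nat.antidiagonalTuple_zero_succ]

lemma hsymm_cons (a : ℝ) (l : List ℝ) (m : ℕ) :
    hsymm (a :: l) m = ∑ p ∈ Finset.HasAntidiagonal.antidiagonal m, a ^ p.1 * hsymm l p.2 := by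
  unfold hsymm
  simp only [List.length_cons]
  simp_rw [Finset.mul_sum, Finset.sum_sigma']
  refine Finset.sum_nbij' (fun k => ⟨(k 0, ∑ i, Fin.tail k i), Fin.tail k⟩)
    (fun pk => Fin.cons pk.1.1 pk.2) ?_ ?_ ?_ ?_ ?_
  · intro k hk
    rw [Finset.Nat.mem_antidiagonalTuple] at hk
    simp only [Finset.mem_sigma, Finset.Nat.mem_antidiagonalTuple, Finset.HasAntidiagonal.mem_antidiagonal]
    refine ⟨?_, ?_⟩
    · rw [← hk, Fin.sum_univ_succ]; rfl
    · simp [Fin.tail]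
  · rintro ⟨⟨p1, p2⟩, k⟩ hk
    simp only [Finset.mem_sigma, Finset.Nat.mem_antidiagonalTuple, Finset.HasAntidiagonal.mem_antidiagonal] at hk
    rw [Finset.Nat.mem_antidiagonalTuple]
    simp only [Fin.sum_univ_succ, Fin.cons_zero, Fin.cons_succ]
    omega
  · intro k _; exact Fin.cons_self_tail k
  · rintro ⟨⟨p1, p2⟩, k⟩ hk
    simp only [Finset.mem_sigma, Finset.Nat.mem_antidiagonalTuple, Finset.HasAntidiagonal.mem_antidiagonal] at hk
    simp [Fin.tail_cons, hk.2]
  · intro k hk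
    rw [Fin.prod_univ_succ]
    simp [Fin.tail]

noncomputable def hsPS (l : List ℝ) : PowerSeries ℝ := PowerSeries.mk (hsymm l)

lemma hsPS_append (l1 l2 : List ℝ) : hsPS (l1 ++ l2) = hsPS l1 * hsPS l2 := by
  induction l1 with
  | nil =>
    have h1 : hsPS ([] : List ℝ) = 1 := by
      ext n
      simp [hsPS, hsymm_nil, PowerSeries.coeff_one]
    simp [h1]
  | cons a l ih =>
    have hc : ∀ l' : List ℝ, hsPS (a :: l') = PowerSeries.mk (fun k => a ^ k) * hsPS l' := by
      intro l'
      ext n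
      rw [hsPS, PowerSeries.coeff_mk, hsymm_cons, PowerSeries.coeff_mul]
      simp [hsPS]
    rw [List.cons_append, hc, hc, ih, mul_assoc]

lemma hsymm_append (l1 l2 : List ℝ) (p : ℕ) :
    hsymm (l1 ++ l2) p = ∑ ab ∈ Finset.HasAntidiagonal.antidiagonal p, hsymm l1 ab.1 * hsymm l2 ab.2 := by
  have := congrArg (PowerSeries.coeff p) (hsPS_append l1 l2)
  simpa [hsPS, PowerSeries.coeff_mul] using this

lemma abs_hsymm_le (l : List ℝ) (m : ℕ) : |hsymm l m| ≤ (l.map abs).sum ^ m := by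
  induction l generalizing m with
  | nil =>
    rw [hsymm_nil]
    rcases m with _ | m <;> simp
  | cons a l ih =>
    rw [hsymm_cons]
    have hS : 0 ≤ (l.map abs).sum := by
      apply List.sum_nonneg; intro y hy
      simp only [List.mem_map] at hy; obtain ⟨z, _, rfl⟩ := hy; exact abs_nonneg z
    calc |∑ p ∈ Finset.HasAntidiagonal.antidiagonal m, a ^ p.1 * hsymm l p.2|
        ≤ ∑ p ∈ Finset.HasAntidiagonal.antidiagonal m, |a| ^ p.1 * (l.map abs).sum ^ p.2 := by
          refine (Finset.abs_sum_le_sum_abs _ _).trans (Finset.sum_le_sum fun p _ => ?_)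
          rw [abs_mul, abs_pow]
          exact mul_le_mul_of_nonneg_left (ih p.2) (pow_nonneg (abs_nonneg a) _)
      _ ≤ ((a :: l).map abs).sum ^ m := by
          rw [List.map_cons, List.sum_cons, add_pow, Finset.Nat.sum_antidiagonal_eq_sum_range_succ_mk]
          refine Finset.sum_le_sum fun i hi => ?_
          have h1 : (1 : ℝ) ≤ (m.choose i : ℝ) := by
            have : 1 ≤ m.choose i := Nat.choose_pos (by simpa using Finset.mem_range_succ_iff.mp hi)
            exact_mod_cast this
          nlinarith [pow_nonneg (abs_nonneg a) i, pow_nonneg hS (m - i),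
            mul_nonneg (pow_nonneg (abs_nonneg a) i) (pow_nonneg hS (m - i))]

lemma sum_abs_nonneg (l : List ℝ) : 0 ≤ (l.map abs).sum := by
  apply List.sum_nonneg; intro y hy
  simp only [List.mem_map] at hy; obtain ⟨z, _, rfl⟩ := hy; exact abs_nonneg z

lemma term_bound (l : List ℝ) (c : ℕ) (r : ℝ) (m : ℕ) :
    |r| ^ (c + m) / (Nat.factorial (c + m)) * |hsymm l m|
      ≤ |r| ^ c * ((|r| * (l.map abs).sum) ^ m / Nat.factorial m) := by
  set S := (l.map abs).sum with hSdef
  have hS : 0 ≤ S := sum_abs_nonneg l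
  have h1 : |r| ^ (c + m) / (Nat.factorial (c + m)) * |hsymm l m|
      ≤ |r| ^ (c + m) / (Nat.factorial (c + m)) * S ^ m := by
    exact mul_le_mul_of_nonneg_left (abs_hsymm_le l m) (by positivity)
  refine h1.trans ?_
  have h2 : |r| ^ (c + m) / (Nat.factorial (c + m)) * S ^ m
      = |r| ^ c * (|r| * S) ^ m / (Nat.factorial (c + m)) := by
    rw [pow_add, mul_pow]; ring
  rw [h2, ← mul_div_assoc]
  have hfac : (Nat.factorial m : ℝ) ≤ (Nat.factorial (c + m) : ℝ) := by
    exact_mod_cast Nat.factorial_le (Nat.le_add_left m c)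
  rw [mul_div_assoc, mul_div_assoc]
  refine mul_le_mul_of_nonneg_left ?_ (by positivity)
  apply div_le_div_of_nonneg_left (by positivity) (by exact_mod_cast Nat.factorial_pos m) hfac

lemma summable_bound (l : List ℝ) (c : ℕ) (r : ℝ) :
    Summable (fun m : ℕ => |r| ^ c * ((|r| * (l.map abs).sum) ^ m / Nat.factorial m)) :=
  (Real.summable_pow_div_factorial (|r| * (l.map abs).sum)).mul_left _

lemma summable_hsymm_norm (l : List ℝ) (c : ℕ) (r : ℝ) :
    Summable (fun m : ℕ => |r| ^ (c + m) / (Nat.factorial (c + m)) * |hsymm l m|) := by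
  refine Summable.of_nonneg_of_le (fun m => by positivity) (term_bound l c r) (summable_bound l c r)

lemma summable_dde_norm (l : List ℝ) (c : ℕ) (r : ℝ) :
    Summable (fun m : ℕ => ‖r ^ (c + m) / (Nat.factorial (c + m)) * hsymm l m‖) := by
  have := summable_hsymm_norm l c r
  refine this.congr fun m => ?_
  rw [Real.norm_eq_abs, abs_mul, abs_div, abs_pow, Nat.abs_cast]

lemma integral_pow_mul_sub_pow (β : ℝ) (a b : ℕ) :
    ∫ τ in (0:ℝ)..β, τ ^ a * (β - τ) ^ b
      = ((Nat.factorial a : ℝ) * Nat.factorial b / Nat.factorial (a + b + 1)) * β ^ (a + b + 1) := by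
  induction b generalizing a with
  | zero =>
    simp only [pow_zero, mul_one]
    rw [integral_pow]
    have h1 : (Nat.factorial a : ℝ) ≠ 0 := by positivity
    rw [show a + 0 + 1 = a + 1 from rfl, Nat.factorial_succ]
    push_cast
    field_simp
    ring
  | succ b ih =>
    have hu : ∀ τ : ℝ, HasDerivAt (fun t => (β - t) ^ (b + 1))
        (-((b+1) * (β - τ) ^ b)) τ := by
      intro τ
      have h0 : HasDerivAt (fun t : ℝ => β - t) (-1) τ := by
        simpa using (hasDerivAt_id τ).const_sub β
      have := h0.fun_pow (b + 1)
      simpa [mul_comm, mul_assoc] using this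
    have hv : ∀ τ : ℝ, HasDerivAt (fun t : ℝ => t ^ (a + 1) / (a + 1)) (τ ^ a) τ := by
      intro τ
      have := (hasDerivAt_pow (a + 1) τ).div_const ((a : ℝ) + 1)
      have hne : ((a : ℝ) + 1) ≠ 0 := by positivity
      simpa [Nat.cast_add, mul_div_assoc, mul_comm, mul_div_cancel_left₀, hne,
        Nat.add_sub_cancel] using this
    have ibp := intervalIntegral.integral_mul_deriv_eq_deriv_mul
      (a := (0:ℝ)) (b := β)
      (u := fun t => (β - t) ^ (b + 1)) (u' := fun τ => -((b+1) * (β - τ) ^ b))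
      (v := fun t : ℝ => t ^ (a + 1) / (a + 1)) (v' := fun τ => τ ^ a)
      (fun τ _ => hu τ) (fun τ _ => hv τ)
      (Continuous.intervalIntegrable (by continuity) _ _)
      (Continuous.intervalIntegrable (by continuity) _ _)
    -- ibp : ∫ (β-τ)^(b+1) * τ^a = [..] - ∫ -((b+1)(β-τ)^b) * (τ^(a+1)/(a+1))
    have key : ∫ τ in (0:ℝ)..β, τ ^ a * (β - τ) ^ (b + 1)
        = ((b:ℝ)+1)/((a:ℝ)+1) * ∫ τ in (0:ℝ)..β, τ ^ (a+1) * (β - τ) ^ b := by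
      have e1 : ∀ τ : ℝ, τ ^ a * (β - τ) ^ (b + 1) = (β - τ) ^ (b + 1) * τ ^ a := fun τ => mul_comm _ _
      simp_rw [e1]
      rw [ibp]
      have : ∀ τ : ℝ, -((b+1) * (β - τ) ^ b) * (τ ^ (a + 1) / (a + 1))
          = -(((b:ℝ)+1)/((a:ℝ)+1) * (τ ^ (a+1) * (β - τ) ^ b)) := by intro τ; ring
      simp_rw [this]
      rw [intervalIntegral.integral_neg, intervalIntegral.integral_const_mul]
      simp
    rw [key, ih]
    have h1 : (a:ℝ) + 1 ≠ 0 := by positivity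
    have h2 : (Nat.factorial (a + 1 + b + 1) : ℝ) ≠ 0 := by positivity
    have h3 : (Nat.factorial (a + (b+1) + 1) : ℝ) ≠ 0 := by positivity
    have e2 : a + (b + 1) + 1 = a + 1 + b + 1 := by ring
    rw [e2]
    have efac : (Nat.factorial (a+1) : ℝ) = ((a:ℝ)+1) * Nat.factorial a := by
      rw [Nat.factorial_succ]; push_cast; ring
    have efacb : (Nat.factorial (b+1) : ℝ) = ((b:ℝ)+1) * Nat.factorial b := by
      rw [Nat.factorial_succ]; push_cast; ring
    have : β ^ (a + 1 + b + 1) = β ^ (a + (b+1) + 1) := by rw [e2]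
    rw [efac, efacb]
    field_simp

open MeasureTheory in
lemma intervalIntegral_tsum {ι : Type*} [Countable ι] {F : ι → ℝ → ℝ} {a b : ℝ}
    (hc : ∀ i, Continuous (F i))
    (hs : Summable fun i => ∫ t in Set.uIoc a b, ‖F i t‖) :
    ∫ t in a..b, (∑' i, F i t) = ∑' i, ∫ t in a..b, F i t := by
  rcases le_total a b with h | h
  · rw [Set.uIoc_of_le h] at hs
    rw [intervalIntegral.integral_of_le h,
      ← integral_tsum_of_summable_integral_norm (fun i => (hc i).integrableOn_Ioc) hs]
    exact tsum_congr fun i => (intervalIntegral.integral_of_le h).symm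
  · rw [Set.uIoc_comm, Set.uIoc_of_le h] at hs
    rw [intervalIntegral.integral_symm b a, intervalIntegral.integral_of_le h,
      ← integral_tsum_of_summable_integral_norm (fun i => (hc i).integrableOn_Ioc) hs,
      ← tsum_neg]
    exact tsum_congr fun i => by
      rw [intervalIntegral.integral_symm b a, intervalIntegral.integral_of_le h]

lemma seg_split (x : ℕ → ℝ) (j d : ℕ) :
    seg x 0 (j + 1 + d) = seg x 0 j ++ seg x (j + 1) (j + 1 + d) := by
  unfold seg
  have h1 : j + 1 + d + 1 - 0 = (j + 1) + (d + 1) := by omega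
  have h2 : j + 1 - 0 = j + 1 := by omega
  have h3 : j + 1 + d + 1 - (j + 1) = d + 1 := by omega
  rw [h1, h2, h3, List.range_add, List.map_append, List.map_map]
  congr 1
  apply List.map_congr_left
  intro i _
  simp [Function.comp]

lemma seg_length (x : ℕ → ℝ) (a b : ℕ) : (seg x a b).length = b + 1 - a := by
  simp [seg]


set_option maxHeartbeats 1000000 in
/-- **Convolution lemma** (Lemma 1): for `q ≥ 1`, `0 ≤ j ≤ q−1`, any tuple `(x_0, …, x_q)` and
any real `β`, `∫_0^β e^{-τ[x_{j+1},…,x_q]} · e^{-(β−τ)[x_0,…,x_j]} dτ = − e^{-β[x_0,…,x_q]}`. -/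
theorem convolution_lemma (q j : ℕ) (hq : 1 ≤ q) (hj : j ≤ q - 1) (x : ℕ → ℝ) (β : ℝ) :
    ∫ τ in (0:ℝ)..β, dde (-τ) (seg x (j + 1) q) * dde (-(β - τ)) (seg x 0 j)
      = - dde (-β) (seg x 0 q) := by
  obtain ⟨d, rfl⟩ : ∃ d, q = j + 1 + d := ⟨q - (j + 1), by omega⟩
  set T := seg x (j + 1) (j + 1 + d) with hTdef
  set H := seg x 0 j with hHdef
  have hT : T.length = d + 1 := by rw [hTdef, seg_length]; omega
  have hH : H.length = j + 1 := by rw [hHdef, seg_length]; omega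
  -- the individual terms of the double series
  set F : ℕ × ℕ → ℝ → ℝ := fun mn τ =>
    ((-τ) ^ (d + mn.1) / (Nat.factorial (d + mn.1)) * hsymm T mn.1) *
      ((-(β - τ)) ^ (j + mn.2) / (Nat.factorial (j + mn.2)) * hsymm H mn.2) with hFdef
  -- pointwise product expansion
  have key : ∀ τ : ℝ, dde (-τ) T * dde (-(β - τ)) H = ∑' mn : ℕ × ℕ, F mn τ := by
    intro τ
    rw [dde, dde, if_neg (by rw [hT]; omega), if_neg (by rw [hH]; omega), hT, hH]
    simp only [Nat.add_sub_cancel]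
    exact tsum_mul_tsum_of_summable_norm (summable_dde_norm T d (-τ))
      (summable_dde_norm H j (-(β - τ)))
  rw [intervalIntegral.integral_congr (g := fun τ => ∑' mn : ℕ × ℕ, F mn τ)
    (fun τ _ => key τ)]
  -- continuity of the terms
  have hFc : ∀ mn : ℕ × ℕ, Continuous (F mn) := by
    intro mn
    rw [hFdef]
    continuity
  -- bound on [0, β]
  have hbound : ∀ mn : ℕ × ℕ, ∀ t ∈ Set.uIoc (0:ℝ) β, ‖F mn t‖ ≤
      (|β| ^ (d + mn.1) / (Nat.factorial (d + mn.1)) * |hsymm T mn.1|) *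
        (|β| ^ (j + mn.2) / (Nat.factorial (j + mn.2)) * |hsymm H mn.2|) := by
    intro mn t ht
    obtain ⟨h11, h12⟩ : |t| ≤ |β| ∧ |β - t| ≤ |β| := by
      rw [Set.mem_uIoc] at ht
      rw [abs_le, abs_le]
      rcases abs_cases β with ⟨e1, e2⟩ | ⟨e1, e2⟩ <;> rcases ht with ⟨u1, u2⟩ | ⟨u1, u2⟩ <;>
        constructor <;> constructor <;> linarith
    rw [hFdef]
    simp only [Real.norm_eq_abs, abs_mul, abs_div, abs_pow, abs_neg, Nat.abs_cast]
    gcongr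
  -- summability of the integrals of the norms
  have hvol : (MeasureTheory.volume (Set.uIoc (0:ℝ) β)).toReal = |β| := by
    rw [Set.uIoc, Real.volume_Ioc, ENNReal.toReal_ofReal (by rw [sub_nonneg]; exact min_le_max)]
    rw [max_sub_min_eq_abs]
    simp [abs_sub_comm]
  have hs : Summable fun mn : ℕ × ℕ => ∫ t in Set.uIoc (0:ℝ) β, ‖F mn t‖ := by
    have hBsum : Summable fun mn : ℕ × ℕ =>
        ((|β| ^ (d + mn.1) / (Nat.factorial (d + mn.1)) * |hsymm T mn.1|) *
          (|β| ^ (j + mn.2) / (Nat.factorial (j + mn.2)) * |hsymm H mn.2|)) * |β| :=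
      ((summable_hsymm_norm T d β).mul_of_nonneg (summable_hsymm_norm H j β)
        (fun m => by positivity) (fun n => by positivity)).mul_right _
    refine Summable.of_nonneg_of_le
      (fun mn => MeasureTheory.integral_nonneg fun t => norm_nonneg _) (fun mn => ?_) hBsum
    have hfin : MeasureTheory.volume (Set.uIoc (0:ℝ) β) < ⊤ := by
      rw [Set.uIoc]; exact measure_Ioc_lt_top
    have hb := MeasureTheory.norm_setIntegral_le_of_norm_le_const (μ := MeasureTheory.volume)
      (s := Set.uIoc (0:ℝ) β) hfin
      (f := fun t => ‖F mn t‖)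
      (fun t ht => by simpa using hbound mn t ht)
    rw [MeasureTheory.measureReal_def, hvol] at hb
    calc ∫ t in Set.uIoc (0:ℝ) β, ‖F mn t‖
        ≤ ‖∫ t in Set.uIoc (0:ℝ) β, ‖F mn t‖‖ := le_abs_self _
      _ ≤ _ := hb
  rw [intervalIntegral_tsum hFc hs]
  -- value of each term integral
  have hint : ∀ mn : ℕ × ℕ, (∫ τ in (0:ℝ)..β, F mn τ)
      = -((-β) ^ (j + 1 + d + (mn.1 + mn.2)) / (Nat.factorial (j + 1 + d + (mn.1 + mn.2))) *
          (hsymm T mn.1 * hsymm H mn.2)) := by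
    rintro ⟨m, n⟩
    have e1 : ∀ τ : ℝ, F (m, n) τ
        = ((-1 : ℝ) ^ (d + m) * (-1 : ℝ) ^ (j + n) * (hsymm T m * hsymm H n) /
            ((Nat.factorial (d + m)) * (Nat.factorial (j + n)))) *
          (τ ^ (d + m) * (β - τ) ^ (j + n)) := by
      intro τ
      simp only [hFdef]
      rw [neg_pow τ, neg_pow (β - τ)]
      ring
    rw [intervalIntegral.integral_congr (fun τ _ => e1 τ),
      intervalIntegral.integral_const_mul, integral_pow_mul_sub_pow]
    have hfac1 : (Nat.factorial (d + m) : ℝ) ≠ 0 := by positivity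
    have hfac2 : (Nat.factorial (j + n) : ℝ) ≠ 0 := by positivity
    have he : d + m + (j + n) + 1 = j + 1 + d + (m + n) := by omega
    rw [he]
    have hfac3 : (Nat.factorial (j + 1 + d + (m + n)) : ℝ) ≠ 0 := by positivity
    have hsgn : ((-β) ^ (j + 1 + d + (m + n)) : ℝ)
        = -((-1 : ℝ) ^ (d + m) * (-1 : ℝ) ^ (j + n) * β ^ (j + 1 + d + (m + n))) := by
      have h2 : (-1 : ℝ) ^ (j + 1 + d + (m + n)) = -((-1 : ℝ) ^ (d + m) * (-1 : ℝ) ^ (j + n)) := by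
        rw [← he, pow_succ, pow_add]; ring
      rw [neg_pow, h2]; ring
    rw [hsgn]
    field_simp
  rw [tsum_congr hint]
  -- regroup the double series along antidiagonals
  set K := j + 1 + d with hK
  set v : ℕ × ℕ → ℝ := fun mn =>
    -((-β) ^ (K + (mn.1 + mn.2)) / (Nat.factorial (K + (mn.1 + mn.2))) *
      (hsymm T mn.1 * hsymm H mn.2)) with hv
  have hvsum : Summable v := by
    apply Summable.of_norm
    have base : Summable fun mn : ℕ × ℕ => (|β| ^ K) *
        (((|β| * (T.map abs).sum) ^ mn.1 / Nat.factorial mn.1) *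
          ((|β| * (H.map abs).sum) ^ mn.2 / Nat.factorial mn.2)) :=
      (((Real.summable_pow_div_factorial _).mul_of_nonneg
        (Real.summable_pow_div_factorial _)
        (fun m => by have := sum_abs_nonneg T; positivity)
        (fun n => by have := sum_abs_nonneg H; positivity))).mul_left _
    refine Summable.of_nonneg_of_le (fun mn => norm_nonneg _) (fun mn => ?_) base
    obtain ⟨m, n⟩ := mn
    have hST : 0 ≤ (T.map abs).sum := sum_abs_nonneg T
    have hSH : 0 ≤ (H.map abs).sum := sum_abs_nonneg H
    have hfac : ((Nat.factorial m : ℝ) * Nat.factorial n) ≤ Nat.factorial (K + (m + n)) := by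
      have h1 : m.factorial * n.factorial ≤ (m + n).factorial :=
        Nat.le_of_dvd (Nat.factorial_pos _) (Nat.factorial_mul_factorial_dvd_factorial_add m n)
      have h2 : (m + n).factorial ≤ (K + (m + n)).factorial :=
        Nat.factorial_le (Nat.le_add_left _ _)
      exact_mod_cast h1.trans h2
    have e2 : ‖v (m, n)‖
        = |β| ^ (K + (m + n)) / (Nat.factorial (K + (m + n))) * (|hsymm T m| * |hsymm H n|) := by
      rw [hv]
      simp only [norm_neg, Real.norm_eq_abs, abs_mul, abs_div, abs_pow, abs_neg, Nat.abs_cast]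
    rw [e2]
    calc |β| ^ (K + (m + n)) / (Nat.factorial (K + (m + n))) * (|hsymm T m| * |hsymm H n|)
        ≤ |β| ^ (K + (m + n)) / ((Nat.factorial m : ℝ) * Nat.factorial n) *
          ((T.map abs).sum ^ m * (H.map abs).sum ^ n) := by
          have hm1 : (0:ℝ) < (Nat.factorial m : ℝ) * Nat.factorial n := by positivity
          refine mul_le_mul ?_ ?_ (by positivity) (by positivity)
          · exact div_le_div_of_nonneg_left (by positivity) hm1 hfac
          · exact mul_le_mul (abs_hsymm_le T m) (abs_hsymm_le H n) (abs_nonneg _)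
              (by positivity)
      _ = (|β| ^ K) * (((|β| * (T.map abs).sum) ^ m / Nat.factorial m) *
            ((|β| * (H.map abs).sum) ^ n / Nat.factorial n)) := by
          rw [pow_add, pow_add, mul_pow, mul_pow]
          field_simp
          ring
  have regroup : (∑' mn : ℕ × ℕ, v mn) = ∑' p : ℕ, ∑ kl ∈ Finset.HasAntidiagonal.antidiagonal p, v kl := by
    rw [← Finset.HasAntidiagonal.sigmaAntidiagonalEquivProd.tsum_eq v]
    refine (Summable.tsum_sigma' (f := fun σ => v (Finset.HasAntidiagonal.sigmaAntidiagonalEquivProd σ))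
      (fun p => (hasSum_fintype _).summable)
      (Finset.HasAntidiagonal.sigmaAntidiagonalEquivProd.summable_iff.mpr hvsum)).trans ?_
    exact tsum_congr fun p => by rw [tsum_fintype]; exact Finset.sum_finset_coe _ _
  rw [show (∑' mn : ℕ × ℕ, -((-β) ^ (K + (mn.1 + mn.2)) /
      (Nat.factorial (K + (mn.1 + mn.2))) * (hsymm T mn.1 * hsymm H mn.2))) = ∑' mn, v mn from rfl,
    regroup, seg_split x j d]
  rw [dde, if_neg (by simp [List.length_append, hT, hH, seg_length])]
  have hlen : (H ++ T).length - 1 = K := by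
    simp only [List.length_append, hT, hH, hK]; omega
  rw [hlen, ← tsum_neg]
  refine tsum_congr fun p => ?_
  have hcongr : ∀ kl ∈ Finset.HasAntidiagonal.antidiagonal p, v kl
      = -((-β) ^ (K + p) / (Nat.factorial (K + p)) * (hsymm T kl.1 * hsymm H kl.2)) := by
    intro kl hkl
    rw [Finset.HasAntidiagonal.mem_antidiagonal] at hkl
    rw [hv]
    simp only
    rw [hkl]
  rw [Finset.sum_congr rfl hcongr, hsymm_append, Finset.sum_neg_distrib, ← Finset.mul_sum]
  have hswap : (∑ kl ∈ Finset.HasAntidiagonal.antidiagonal p, hsymm T kl.1 * hsymm H kl.2)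
      = ∑ ab ∈ Finset.HasAntidiagonal.antidiagonal p, hsymm H ab.1 * hsymm T ab.2 := by
    rw [← Finset.Nat.sum_antidiagonal_swap (f := fun ab => hsymm H ab.1 * hsymm T ab.2)]
    exact Finset.sum_congr rfl fun kl _ => mul_comm _ _
  rw [hswap]
end

section
/- Parametric derivative of the divided difference of the exponential: for every integer q ≥ 1 and every tuple (x_0, …, x_q) of real numbers, the function τ ↦ e^{-τ[x_0, …, x_q]} is differentiable on ℝ and for every real τ its derivative satisfies (d/dτ) e^{-τ[x_0, …, x_q]} = −x_0 · e^{-τ[x_0, …, x_q]} − e^{-τ[x_1, …, x_q]}. -/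
open scoped BigOperators

lemma hsymm_zero (l : List ℝ) : hsymm l 0 = 1 := by
  simp [hsymm, Finset.Nat.antidiagonalTuple_zero_right]

lemma sum_antidiagonalTuple_succ {M : Type*} [AddCommMonoid M] (n m : ℕ)
    (f : (Fin (n + 1) → ℕ) → M) :
    ∑ k ∈ Finset.Nat.antidiagonalTuple (n + 1) m, f k
      = ∑ p ∈ Finset.HasAntidiagonal.antidiagonal m, ∑ k ∈ Finset.Nat.antidiagonalTuple n p.2,
          f (Fin.cons p.1 k) := by
  classical
  rw [Finset.sum_sigma']
  refine Finset.sum_nbij' (i := fun (k : Fin (n + 1) → ℕ) => (⟨(k 0, ∑ i : Fin n, k i.succ), Fin.tail k⟩ :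
      Σ _ : ℕ × ℕ, Fin n → ℕ))
    (j := fun (pk : Σ _ : ℕ × ℕ, Fin n → ℕ) => Fin.cons pk.1.1 pk.2) ?_ ?_ ?_ ?_ ?_
  · intro k hk
    rw [Finset.Nat.mem_antidiagonalTuple] at hk
    simp only [Finset.mem_sigma, Finset.HasAntidiagonal.mem_antidiagonal, Finset.Nat.mem_antidiagonalTuple]
    constructor
    · rw [← hk, Fin.sum_univ_succ]
    · rfl
  · intro pk hpk
    rw [Finset.mem_sigma, Finset.HasAntidiagonal.mem_antidiagonal, Finset.Nat.mem_antidiagonalTuple] at hpk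
    rw [Finset.Nat.mem_antidiagonalTuple, Fin.sum_univ_succ]
    simp [hpk.2, hpk.1]
  · intro k hk
    simp [Fin.cons_self_tail]
  · intro pk hpk
    rw [Finset.mem_sigma, Finset.HasAntidiagonal.mem_antidiagonal, Finset.Nat.mem_antidiagonalTuple] at hpk
    obtain ⟨⟨p1, p2⟩, k⟩ := pk
    simp only [Fin.cons_zero, Fin.cons_succ, Fin.tail_cons]
    congr 2
    exact hpk.2
  · intro k hk
    simp [Fin.cons_self_tail]

lemma hsymm_succ (a : ℝ) (l : List ℝ) (m : ℕ) :
    hsymm (a :: l) (m + 1) = a * hsymm (a :: l) m + hsymm l (m + 1) := by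
  rw [hsymm_cons, hsymm_cons, Finset.Nat.antidiagonal_succ, Finset.sum_cons, Finset.sum_map,
    Finset.mul_sum]
  simp only [Function.Embedding.coe_prodMap, Function.Embedding.coeFn_mk,
    Function.Embedding.refl_apply, Prod.map_fst, Prod.map_snd, pow_zero, one_mul]
  rw [add_comm]
  congr 1
  refine Finset.sum_congr rfl fun p hp => ?_
  rw [pow_succ']
  ring

lemma hsymm_exists_bound (l : List ℝ) :
    ∃ K : ℝ, 1 ≤ K ∧ ∀ m, |hsymm l m| ≤ K ^ m := by
  classical
  set n := l.length with hn
  set M : ℝ := 1 + ∑ j : Fin n, |l.get j| with hMdef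
  have hM1 : 1 ≤ M := le_add_of_nonneg_right (Finset.sum_nonneg fun _ _ => abs_nonneg _)
  have hM0 : 0 ≤ M := le_trans zero_le_one hM1
  have hMx : ∀ i : Fin n, |l.get i| ≤ M := by
    intro i
    have h1 : |l.get i| ≤ ∑ j : Fin n, |l.get j| :=
      Finset.single_le_sum (f := fun j => |l.get j|) (fun j _ => abs_nonneg _)
        (Finset.mem_univ i)
    have : (0:ℝ) ≤ 1 := zero_le_one
    linarith
  have h2n : (1:ℝ) ≤ 2 ^ n := by
    have : (1:ℝ) ^ n ≤ 2 ^ n := pow_le_pow_left₀ zero_le_one one_le_two n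
    simpa using this
  refine ⟨2 ^ n * M, ?_, ?_⟩
  · have := mul_le_mul h2n hM1 zero_le_one (by positivity : (0:ℝ) ≤ 2 ^ n)
    simpa using this
  intro m
  have h1 : ∀ k ∈ Finset.Nat.antidiagonalTuple n m,
      |∏ i : Fin n, l.get i ^ k i| ≤ M ^ m := by
    intro k hk
    rw [Finset.Nat.mem_antidiagonalTuple] at hk
    calc |∏ i : Fin n, l.get i ^ k i| = ∏ i : Fin n, |l.get i| ^ k i := by
          rw [Finset.abs_prod]; exact Finset.prod_congr rfl fun i _ => abs_pow _ _
      _ ≤ ∏ i : Fin n, M ^ k i :=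
          Finset.prod_le_prod (fun i _ => pow_nonneg (abs_nonneg _) _)
            (fun i _ => pow_le_pow_left₀ (abs_nonneg _) (hMx i) _)
      _ = M ^ m := by rw [Finset.prod_pow_eq_pow_sum, hk]
  have hcard : (Finset.Nat.antidiagonalTuple n m).card ≤ (m + 1) ^ n := by
    have hsub : Finset.Nat.antidiagonalTuple n m ⊆
        Fintype.piFinset fun _ : Fin n => Finset.range (m + 1) := by
      intro k hk
      rw [Finset.Nat.mem_antidiagonalTuple] at hk
      rw [Fintype.mem_piFinset]
      intro i
      rw [Finset.mem_range]
      have := Finset.single_le_sum (f := k) (fun j _ => Nat.zero_le _) (Finset.mem_univ i)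
      omega
    calc (Finset.Nat.antidiagonalTuple n m).card
        ≤ (Fintype.piFinset fun _ : Fin n => Finset.range (m + 1)).card :=
          Finset.card_le_card hsub
      _ = (m + 1) ^ n := by simp [Fintype.card_piFinset]
  have hstep : ((m:ℝ) + 1) ^ n ≤ ((2:ℝ) ^ n) ^ m := by
    have h2 : (m:ℝ) + 1 ≤ (2:ℝ) ^ m := by
      have := Nat.lt_two_pow_self (n := m)
      have : (m:ℝ) + 1 ≤ ((2 ^ m : ℕ) : ℝ) := by exact_mod_cast this
      simpa using this
    calc ((m:ℝ) + 1) ^ n ≤ ((2:ℝ) ^ m) ^ n :=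
        pow_le_pow_left₀ (by positivity) h2 n
      _ = ((2:ℝ) ^ n) ^ m := by rw [← pow_mul, mul_comm, pow_mul]
  calc |hsymm l m| ≤ ∑ k ∈ Finset.Nat.antidiagonalTuple n m, |∏ i : Fin n, l.get i ^ k i| :=
        Finset.abs_sum_le_sum_abs _ _
    _ ≤ ∑ _k ∈ Finset.Nat.antidiagonalTuple n m, M ^ m := Finset.sum_le_sum h1
    _ = (Finset.Nat.antidiagonalTuple n m).card * M ^ m := by
        rw [Finset.sum_const, nsmul_eq_mul]
    _ ≤ ((m:ℝ) + 1) ^ n * M ^ m := by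
        have : ((Finset.Nat.antidiagonalTuple n m).card : ℝ) ≤ ((m:ℝ) + 1) ^ n := by
          exact_mod_cast hcard
        exact mul_le_mul_of_nonneg_right this (pow_nonneg hM0 _)
    _ ≤ ((2:ℝ) ^ n) ^ m * M ^ m := mul_le_mul_of_nonneg_right hstep (pow_nonneg hM0 _)
    _ = (2 ^ n * M) ^ m := (mul_pow _ _ _).symm

lemma summable_aux (t : ℝ) (c : ℕ) (K : ℝ) (hK1 : 1 ≤ K) (l : List ℝ)
    (hKb : ∀ m, |hsymm l m| ≤ K ^ m) :
    Summable (fun m : ℕ => t ^ (c + m) / (Nat.factorial (c + m)) * hsymm l m) := by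
  set R : ℝ := |t| + 1 with hR
  have hR1 : 1 ≤ R := le_add_of_nonneg_left (abs_nonneg _)
  have hR0 : 0 ≤ R := le_trans zero_le_one hR1
  apply Summable.of_norm
  have hsum : Summable (fun m : ℕ => R ^ c * ((R * K) ^ m / m.factorial)) :=
    (Real.summable_pow_div_factorial (R * K)).mul_left _
  refine hsum.of_nonneg_of_le (fun m => norm_nonneg _) (fun m => ?_)
  have hfac : (m.factorial : ℝ) ≤ ((c + m).factorial : ℝ) := by
    exact_mod_cast Nat.factorial_le (Nat.le_add_left m c)
  have hfac0 : (0:ℝ) < (m.factorial : ℝ) := by exact_mod_cast m.factorial_pos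
  have hfac0' : (0:ℝ) < ((c + m).factorial : ℝ) := by exact_mod_cast (c + m).factorial_pos
  calc ‖t ^ (c + m) / (Nat.factorial (c + m)) * hsymm l m‖
      = |t| ^ (c + m) / ((c + m).factorial : ℝ) * |hsymm l m| := by
        rw [Real.norm_eq_abs, abs_mul, abs_div, abs_pow]
        congr 2
        exact abs_of_nonneg (by positivity)
    _ ≤ R ^ (c + m) / (m.factorial : ℝ) * K ^ m := by
        apply mul_le_mul _ (hKb m) (abs_nonneg _) (by positivity)
        apply div_le_div₀ (by positivity)
          (pow_le_pow_left₀ (abs_nonneg _) (by simp [hR]) _) hfac0 hfac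
    _ = R ^ c * ((R * K) ^ m / m.factorial) := by
        rw [pow_add, mul_pow]; ring

lemma seg_zero_cons (x : ℕ → ℝ) (q : ℕ) : seg x 0 q = x 0 :: seg x 1 q := by
  unfold seg
  rw [Nat.sub_zero, List.range_succ_eq_map, List.map_cons, List.map_map]
  rw [show q + 1 - 1 = q from rfl]
  congr 1
  refine List.map_congr_left fun i _ => ?_
  simp [Function.comp, Nat.add_comm]


/-- **Parametric derivative**: for `q ≥ 1` and any tuple `(x_0, …, x_q)`, the map
`τ ↦ e^{-τ[x_0,…,x_q]}` is differentiable on `ℝ` with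
`(d/dτ) e^{-τ[x_0,…,x_q]} = −x_0 e^{-τ[x_0,…,x_q]} − e^{-τ[x_1,…,x_q]}`. -/
theorem dde_parametric_derivative (q : ℕ) (hq : 1 ≤ q) (x : ℕ → ℝ) :
    Differentiable ℝ (fun τ : ℝ => dde (-τ) (seg x 0 q))
      ∧ ∀ τ : ℝ, deriv (fun τ : ℝ => dde (-τ) (seg x 0 q)) τ
          = -(x 0) * dde (-τ) (seg x 0 q) - dde (-τ) (seg x 1 q) := by
  obtain ⟨e, rfl⟩ : ∃ e, q = e + 1 := ⟨q - 1, by omega⟩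
  set l := seg x 0 (e + 1) with hl
  set tl := seg x 1 (e + 1) with htl
  have hlen : l.length = e + 2 := by rw [hl, seg_length]; omega
  have hlen' : tl.length = e + 1 := by rw [htl, seg_length]; omega
  have hcons : l = x 0 :: tl := seg_zero_cons x (e + 1)
  obtain ⟨K, hK1, hKb⟩ := hsymm_exists_bound l
  obtain ⟨K', hK1', hKb'⟩ := hsymm_exists_bound tl
  have hfe : ∀ m : ℕ, e + (m + 1) = e + 1 + m := fun m => by omega
  have hddel : ∀ t : ℝ, dde t l = ∑' m : ℕ,
      t ^ (e + 1 + m) / (Nat.factorial (e + 1 + m)) * hsymm l m := by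
    intro t
    rw [dde, hlen]
    rw [if_neg (by omega)]
    simp only [show e + 2 - 1 = e + 1 from by omega]
  have hddetl : ∀ t : ℝ, dde t tl = ∑' m : ℕ,
      t ^ (e + m) / (Nat.factorial (e + m)) * hsymm tl m := by
    intro t
    rw [dde, hlen']
    rw [if_neg (by omega)]
    simp only [show e + 1 - 1 = e from by omega]
  have key : ∀ τ : ℝ, HasDerivAt (fun y : ℝ => dde (-y) l)
      (-(x 0) * dde (-τ) l - dde (-τ) tl) τ := by
    intro τ
    set R : ℝ := |τ| + 1 with hR
    have hR1 : (1:ℝ) ≤ R := le_add_of_nonneg_left (abs_nonneg _)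
    have hR0 : (0:ℝ) < R := lt_of_lt_of_le one_pos hR1
    have hτR : τ ∈ Metric.ball (0:ℝ) R := by
      rw [Metric.mem_ball, Real.dist_eq, sub_zero]
      linarith [abs_nonneg τ]
    have hderiv : ∀ (m : ℕ) (y : ℝ), HasDerivAt
        (fun z : ℝ => (-z) ^ (e + 1 + m) / (Nat.factorial (e + 1 + m)) * hsymm l m)
        (-((-y) ^ (e + m) / (Nat.factorial (e + m)) * hsymm l m)) y := by
      intro m y
      have h1 : HasDerivAt (fun z : ℝ => -z) (-1) y := (hasDerivAt_id y).neg
      have h2 : HasDerivAt (fun z : ℝ => (-z) ^ (e + 1 + m))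
          (((e + 1 + m : ℕ) : ℝ) * (-y) ^ (e + m) * (-1)) y := by
        have h := (hasDerivAt_pow (e + 1 + m) (-y)).comp y h1
        rwa [show e + 1 + m - 1 = e + m from by omega] at h
      have h3 := (h2.div_const ((Nat.factorial (e + 1 + m) : ℝ))).mul_const (hsymm l m)
      refine h3.congr_deriv ?_
      have hfacs : ((Nat.factorial (e + 1 + m)) : ℝ)
          = ((e + 1 + m : ℕ) : ℝ) * ((Nat.factorial (e + m)) : ℝ) := by
        rw [show e + 1 + m = (e + m) + 1 from by omega, Nat.factorial_succ]
        push_cast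
        ring
      rw [hfacs]
      have h0 : ((Nat.factorial (e + m)) : ℝ) ≠ 0 :=
        Nat.cast_ne_zero.mpr (Nat.factorial_ne_zero _)
      have h0' : ((e + 1 + m : ℕ) : ℝ) ≠ 0 := Nat.cast_ne_zero.mpr (by omega)
      field_simp
    have hu_sum : Summable (fun m : ℕ => R ^ e * ((R * K) ^ m / m.factorial)) :=
      (Real.summable_pow_div_factorial (R * K)).mul_left _
    have hbound : ∀ (m : ℕ) (y : ℝ), y ∈ Metric.ball (0:ℝ) R →
        ‖-((-y) ^ (e + m) / (Nat.factorial (e + m)) * hsymm l m)‖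
          ≤ R ^ e * ((R * K) ^ m / m.factorial) := by
      intro m y hy
      rw [Metric.mem_ball, Real.dist_eq, sub_zero] at hy
      have hyR : |y| ≤ R := le_of_lt hy
      have hfac : (m.factorial : ℝ) ≤ ((e + m).factorial : ℝ) := by
        exact_mod_cast Nat.factorial_le (Nat.le_add_left m e)
      have hfac0 : (0:ℝ) < (m.factorial : ℝ) := by exact_mod_cast m.factorial_pos
      have hK0 : (0:ℝ) ≤ K := le_trans zero_le_one hK1
      calc ‖-((-y) ^ (e + m) / (Nat.factorial (e + m)) * hsymm l m)‖
          = |y| ^ (e + m) / ((e + m).factorial : ℝ) * |hsymm l m| := by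
            rw [norm_neg, Real.norm_eq_abs, abs_mul, abs_div, abs_pow, abs_neg]
            congr 2
            exact abs_of_nonneg (by positivity)
        _ ≤ R ^ (e + m) / (m.factorial : ℝ) * K ^ m := by
            apply mul_le_mul _ (hKb m) (abs_nonneg _) (by positivity)
            exact div_le_div₀ (by positivity)
              (pow_le_pow_left₀ (abs_nonneg _) hyR _) hfac0 hfac
        _ = R ^ e * ((R * K) ^ m / m.factorial) := by
            rw [pow_add, mul_pow]; ring
    have hg0 : Summable (fun m : ℕ =>
        (-τ) ^ (e + 1 + m) / (Nat.factorial (e + 1 + m)) * hsymm l m) :=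
      summable_aux (-τ) (e + 1) K hK1 l hKb
    have H := hasDerivAt_tsum_of_isPreconnected hu_sum Metric.isOpen_ball
      (convex_ball (0:ℝ) R).isPreconnected (fun m y _ => hderiv m y) hbound hτR hg0 hτR
    have hfun : (fun z : ℝ => ∑' m : ℕ,
        (-z) ^ (e + 1 + m) / (Nat.factorial (e + 1 + m)) * hsymm l m)
        = fun y : ℝ => dde (-y) l := funext fun y => (hddel (-y)).symm
    rw [hfun] at H
    have hsum_eq : (∑' m : ℕ, -((-τ) ^ (e + m) / (Nat.factorial (e + m)) * hsymm l m))
        = -(x 0) * dde (-τ) l - dde (-τ) tl := by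
      set t : ℝ := -τ with ht
      have hA : Summable (fun m : ℕ =>
          t ^ (e + m) / (Nat.factorial (e + m)) * hsymm l m) :=
        summable_aux t e K hK1 l hKb
      have hSb : Summable (fun m : ℕ =>
          t ^ (e + 1 + m) / (Nat.factorial (e + 1 + m)) * hsymm l m) :=
        summable_aux t (e + 1) K hK1 l hKb
      have hStl : Summable (fun m : ℕ =>
          t ^ (e + m) / (Nat.factorial (e + m)) * hsymm tl m) :=
        summable_aux t e K' hK1' tl hKb'
      have hStl' : Summable (fun m : ℕ =>
          t ^ (e + 1 + m) / (Nat.factorial (e + 1 + m)) * hsymm tl (m + 1)) := by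
        have h := hStl.comp_injective Nat.succ_injective
        exact h.congr fun m => by
          simp only [Function.comp_apply]
          rw [show e + Nat.succ m = e + 1 + m from by omega]
      rw [tsum_neg, hA.tsum_eq_zero_add]
      have hsplit : ∀ m : ℕ,
          t ^ (e + (m + 1)) / (Nat.factorial (e + (m + 1))) * hsymm l (m + 1)
            = x 0 * (t ^ (e + 1 + m) / (Nat.factorial (e + 1 + m)) * hsymm l m)
              + t ^ (e + 1 + m) / (Nat.factorial (e + 1 + m)) * hsymm tl (m + 1) := by
        intro m
        rw [hfe m, hcons, hsymm_succ]
        ring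
      rw [tsum_congr hsplit, Summable.tsum_add (hSb.mul_left (x 0)) hStl', tsum_mul_left]
      have htl_eq : dde t tl = t ^ e / (Nat.factorial e) * 1
          + ∑' m : ℕ, t ^ (e + 1 + m) / (Nat.factorial (e + 1 + m)) * hsymm tl (m + 1) := by
        rw [hddetl t, hStl.tsum_eq_zero_add]
        congr 1
        · rw [Nat.add_zero, hsymm_zero]
        · exact tsum_congr fun m => by rw [hfe m]
      rw [hddel t]
      rw [hsymm_zero l]  -- for the m = 0 term hsymm l 0
      have : t ^ (e + 0) / (Nat.factorial (e + 0)) = t ^ e / (Nat.factorial e) := by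
        norm_num
      rw [Nat.add_zero] at *
      linarith [htl_eq]
    rw [hsum_eq] at H
    exact H
  refine ⟨fun τ => (key τ).differentiableAt, fun τ => (key τ).deriv⟩
end

section
/- Repeated-argument sum simplification: for every integer q ≥ 0, every tuple (x_0, …, x_q) of real numbers and every real τ, one has Σ_{j=0}^{q} e^{-τ[x_0, …, x_q, x_j]} = −τ · e^{-τ[x_0, …, x_q]}, where [x_0, …, x_q, x_j] denotes the tuple (x_0, …, x_q) with x_j appended. -/
open scoped BigOperators

lemma key (n m : ℕ) (f : Fin n → ℝ) (j : Fin n) :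
    ∑ k ∈ Finset.Nat.antidiagonalTuple (n+1) m, ∏ i : Fin (n+1), Fin.snoc f (f j) i ^ k i
    = ∑ k ∈ Finset.Nat.antidiagonalTuple n m, ((k j : ℝ) + 1) * ∏ i : Fin n, f i ^ k i := by
  have hR : ∀ k : Fin n → ℕ, ((k j : ℝ) + 1) * ∏ i, f i ^ k i
      = ∑ _c ∈ Finset.range (k j + 1), ∏ i, f i ^ k i := fun k => by
    rw [Finset.sum_const, Finset.card_range, nsmul_eq_mul]; push_cast; ring
  simp_rw [hR]
  rw [Finset.sum_sigma']
  refine Finset.sum_nbij'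
    (fun k => ⟨fun i => k i.castSucc + if i = j then k (Fin.last n) else 0, k (Fin.last n)⟩)
    (fun p => Fin.snoc (fun i => p.1 i - if i = j then p.2 else 0) p.2) ?_ ?_ ?_ ?_ ?_
  · intro k hk
    rw [Finset.Nat.mem_antidiagonalTuple] at hk
    rw [Fin.sum_univ_castSucc] at hk
    rw [Finset.mem_sigma, Finset.Nat.mem_antidiagonalTuple]
    constructor
    · rw [Finset.sum_add_distrib, Finset.sum_ite_eq' Finset.univ j]
      simpa using hk
    · simp only [Finset.mem_range, if_true]
      omega
  · intro p hp
    rw [Finset.mem_sigma, Finset.Nat.mem_antidiagonalTuple, Finset.mem_range] at hp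
    obtain ⟨h1, h2⟩ := hp
    rw [Finset.Nat.mem_antidiagonalTuple, Fin.sum_univ_castSucc]
    simp only [Fin.snoc_castSucc, Fin.snoc_last]
    have hle : ∀ i ∈ Finset.univ, (if i = j then p.2 else 0) ≤ p.1 i := by
      intro i _; split_ifs with h
      · subst h; omega
      · exact Nat.zero_le _
    rw [Finset.sum_tsub_distrib Finset.univ hle, Finset.sum_ite_eq' Finset.univ j]
    simp only [Finset.mem_univ, if_true]
    have hjle : p.2 ≤ ∑ i, p.1 i := le_trans (by omega) (Finset.single_le_sum (f := p.1) (fun _ _ => Nat.zero_le _) (Finset.mem_univ j))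
    omega
  · intro k _
    funext i
    refine Fin.lastCases ?_ ?_ i
    · simp
    · intro i
      simp only [Fin.snoc_castSucc]
      split_ifs <;> omega
  · intro p hp
    rw [Finset.mem_sigma, Finset.mem_range] at hp
    obtain ⟨_, h2⟩ := hp
    obtain ⟨p1, c⟩ := p
    simp only at h2
    refine Sigma.ext ?_ ?_
    swap
    · simp
    simp only [Fin.snoc_castSucc, Fin.snoc_last]
    funext i
    split_ifs with h
    · subst h; omega
    · simp
  · intro k _
    rw [Fin.prod_univ_castSucc]
    simp only [Fin.snoc_castSucc, Fin.snoc_last]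
    have : ∀ i : Fin n, f i ^ (k i.castSucc + if i = j then k (Fin.last n) else 0)
        = f i ^ k i.castSucc * (if i = j then f i ^ k (Fin.last n) else 1) := by
      intro i; rw [pow_add]; split_ifs <;> simp
    simp_rw [this]
    rw [Finset.prod_mul_distrib, Finset.prod_ite_eq' Finset.univ j (fun i => f i ^ k (Fin.last n))]
    simp

lemma hsymm_eq_of_len {l : List ℝ} {n : ℕ} (h : l.length = n) (m : ℕ) :
    hsymm l m = ∑ k ∈ Finset.Nat.antidiagonalTuple n m,
      ∏ i : Fin n, l.get (Fin.cast h.symm i) ^ k i := by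
  subst h; rfl

lemma get_append_snoc (l : List ℝ) (a : ℝ) (h : (l ++ [a]).length = l.length + 1)
    (i : Fin (l.length + 1)) :
    (l ++ [a]).get (Fin.cast h.symm i) = Fin.snoc (α := fun _ => ℝ) l.get a i := by
  refine Fin.lastCases ?_ ?_ i
  · rw [Fin.snoc_last]
    simp [List.get_eq_getElem, List.getElem_concat_length]
  · intro i
    rw [Fin.snoc_castSucc]
    simp [List.get_eq_getElem, List.getElem_append_left i.isLt]

lemma hsymm_append_s7 (l : List ℝ) (a : ℝ) (m : ℕ) :
    hsymm (l ++ [a]) m = ∑ k ∈ Finset.Nat.antidiagonalTuple (l.length + 1) m,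
      ∏ i : Fin (l.length + 1), Fin.snoc (α := fun _ => ℝ) l.get a i ^ k i := by
  rw [hsymm_eq_of_len (n := l.length + 1) (by simp) m]
  refine Finset.sum_congr rfl fun k _ => Finset.prod_congr rfl fun i _ => ?_
  rw [get_append_snoc]
  simp

lemma key2 (n m : ℕ) (f : Fin n → ℝ) :
    ∑ j : Fin n, ∑ k ∈ Finset.Nat.antidiagonalTuple (n+1) m,
        ∏ i : Fin (n+1), Fin.snoc f (f j) i ^ k i
    = ((n : ℝ) + m) * ∑ k ∈ Finset.Nat.antidiagonalTuple n m, ∏ i : Fin n, f i ^ k i := by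
  simp_rw [key n m f]
  rw [Finset.sum_comm, Finset.mul_sum]
  refine Finset.sum_congr rfl fun k hk => ?_
  rw [Finset.Nat.mem_antidiagonalTuple] at hk
  rw [← Finset.sum_mul]
  congr 1
  have : ∑ j : Fin n, ((k j : ℝ) + 1) = ((∑ j : Fin n, k j : ℕ) : ℝ) + n := by
    push_cast; rw [Finset.sum_add_distrib]; simp
  rw [this, hk]; ring

lemma hsymm_abs_le (l : List ℝ) (m : ℕ) :
    |hsymm l m| ≤ (m + 1 : ℝ) ^ l.length * (1 + ∑ i : Fin l.length, |l.get i|) ^ m := by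
  set n := l.length with hn
  set M : ℝ := 1 + ∑ i : Fin n, |l.get i| with hM
  have hsum0 : 0 ≤ ∑ i : Fin n, |l.get i| := Finset.sum_nonneg fun _ _ => abs_nonneg _
  have hM0 : 0 ≤ M := by rw [hM]; linarith
  have hM1 : ∀ i : Fin n, |l.get i| ≤ M := by
    intro i
    have : |l.get i| ≤ ∑ i : Fin n, |l.get i| :=
      Finset.single_le_sum (f := fun i : Fin n => |l.get i|) (fun _ _ => abs_nonneg _)
        (Finset.mem_univ i)
    rw [hM]; linarith
  have hterm : ∀ k ∈ Finset.Nat.antidiagonalTuple n m,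
      |∏ i : Fin n, l.get i ^ k i| ≤ M ^ m := by
    intro k hk
    rw [Finset.Nat.mem_antidiagonalTuple] at hk
    calc |∏ i : Fin n, l.get i ^ k i| = ∏ i : Fin n, |l.get i| ^ k i := by
          rw [Finset.abs_prod]; exact Finset.prod_congr rfl fun i _ => abs_pow _ _
      _ ≤ ∏ i : Fin n, M ^ k i :=
          Finset.prod_le_prod (fun i _ => pow_nonneg (abs_nonneg _) _)
            (fun i _ => pow_le_pow_left₀ (abs_nonneg _) (hM1 i) _)
      _ = M ^ ∑ i : Fin n, k i := Finset.prod_pow_eq_pow_sum _ _ _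
      _ = M ^ m := by rw [hk]
  have hcard : (((Finset.Nat.antidiagonalTuple n m).card : ℕ) : ℝ) ≤ (m + 1 : ℝ) ^ n := by
    have hsub : Finset.Nat.antidiagonalTuple n m
        ⊆ Fintype.piFinset (fun _ : Fin n => Finset.range (m + 1)) := by
      intro k hk
      rw [Finset.Nat.mem_antidiagonalTuple] at hk
      rw [Fintype.mem_piFinset]
      intro i
      rw [Finset.mem_range]
      have := Finset.single_le_sum (f := k) (fun _ _ => Nat.zero_le _) (Finset.mem_univ i)
      omega
    have h1 := Finset.card_le_card hsub
    have hc : (Fintype.piFinset (fun _ : Fin n => Finset.range (m + 1))).card = (m + 1) ^ n := by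
      rw [Fintype.card_piFinset]; simp
    rw [hc] at h1
    exact_mod_cast h1
  calc |hsymm l m| ≤ ∑ k ∈ Finset.Nat.antidiagonalTuple n m, |∏ i : Fin n, l.get i ^ k i| :=
        Finset.abs_sum_le_sum_abs _ _
    _ ≤ ∑ _k ∈ Finset.Nat.antidiagonalTuple n m, M ^ m := Finset.sum_le_sum hterm
    _ = ((Finset.Nat.antidiagonalTuple n m).card : ℝ) * M ^ m := by
        rw [Finset.sum_const, nsmul_eq_mul]
    _ ≤ (m + 1 : ℝ) ^ n * M ^ m :=
        mul_le_mul_of_nonneg_right hcard (pow_nonneg hM0 m)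

lemma summable_dde (t : ℝ) (N : ℕ) (l : List ℝ) :
    Summable (fun m : ℕ => t ^ (N + m) / (Nat.factorial (N + m)) * hsymm l m) := by
  set n := l.length with hn
  set M : ℝ := 1 + ∑ i : Fin n, |l.get i| with hM
  have hsum0 : 0 ≤ ∑ i : Fin n, |l.get i| := Finset.sum_nonneg fun _ _ => abs_nonneg _
  have hM1 : (1:ℝ) ≤ M := by rw [hM]; linarith
  have hM0 : (0:ℝ) ≤ M := by linarith
  set r : ℝ := 2 ^ n * M * |t| with hr
  have hb : ∀ m : ℕ, |t ^ (N + m) / (Nat.factorial (N + m)) * hsymm l m|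
      ≤ (|t| ^ N / (Nat.factorial N)) * (r ^ m / Nat.factorial m) := by
    intro m
    rw [abs_mul, abs_div, abs_pow, Nat.abs_cast]
    calc |t| ^ (N + m) / ((Nat.factorial (N + m) : ℕ) : ℝ) * |hsymm l m|
        ≤ |t| ^ (N + m) / ((Nat.factorial N * Nat.factorial m : ℕ) : ℝ)
            * ((m + 1 : ℝ) ^ n * M ^ m) := by
          apply mul_le_mul ?_ (hsymm_abs_le l m) (abs_nonneg _) (by positivity)
          have hfle : ((Nat.factorial N * Nat.factorial m : ℕ) : ℝ)
              ≤ ((Nat.factorial (N + m) : ℕ) : ℝ) := by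
            exact_mod_cast Nat.le_of_dvd (Nat.factorial_pos _)
              (Nat.factorial_mul_factorial_dvd_factorial_add N m)
          have hfpos : (0:ℝ) < ((Nat.factorial N * Nat.factorial m : ℕ) : ℝ) := by positivity
          exact div_le_div_of_nonneg_left (by positivity) hfpos hfle
      _ ≤ |t| ^ (N + m) / ((Nat.factorial N * Nat.factorial m : ℕ) : ℝ)
            * (((2:ℝ) ^ n) ^ m * M ^ m) := by
          have h2 : ((m : ℝ) + 1) ^ n ≤ ((2:ℝ) ^ n) ^ m := by
            rw [← pow_mul, mul_comm n m, pow_mul]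
            refine pow_le_pow_left₀ (by positivity) ?_ _
            exact_mod_cast Nat.succ_le_of_lt (Nat.lt_two_pow_self (n := m))
          have hXpos : (0:ℝ) ≤ |t| ^ (N + m) / ((Nat.factorial N * Nat.factorial m : ℕ) : ℝ) := by
            positivity
          have hMm : (0:ℝ) ≤ M ^ m := pow_nonneg hM0 m
          exact mul_le_mul_of_nonneg_left (mul_le_mul_of_nonneg_right h2 hMm) hXpos
      _ = (|t| ^ N / (Nat.factorial N)) * (r ^ m / Nat.factorial m) := by
          rw [hr, pow_add]
          push_cast
          rw [mul_pow, mul_pow]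
          have h1 : (Nat.factorial N : ℝ) ≠ 0 := Nat.cast_ne_zero.mpr (Nat.factorial_ne_zero N)
          have h2 : (Nat.factorial m : ℝ) ≠ 0 := Nat.cast_ne_zero.mpr (Nat.factorial_ne_zero m)
          field_simp
  refine Summable.of_abs (Summable.of_nonneg_of_le (fun m => abs_nonneg _) hb ?_)
  exact (Real.summable_pow_div_factorial r).mul_left _

lemma main_list (t : ℝ) (l : List ℝ) :
    ∑ j : Fin l.length, dde t (l ++ [l.get j]) = t * dde t l := by
  rcases Nat.eq_zero_or_pos l.length with h0 | hpos
  · have : l = [] := List.length_eq_zero_iff.mp h0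
    subst this
    simp [dde]
  · obtain ⟨N, hN⟩ : ∃ N, l.length = N + 1 := ⟨l.length - 1, by omega⟩
    have hdde : ∀ a : ℝ, dde t (l ++ [a])
        = ∑' m : ℕ, t ^ (N + 1 + m) / (Nat.factorial (N + 1 + m)) * hsymm (l ++ [a]) m := by
      intro a
      rw [dde, if_neg (by simp)]
      simp [hN]
    simp_rw [hdde]
    rw [← Summable.tsum_finsetSum (fun j _ => summable_dde t (N + 1) _)]
    have hpoint : ∀ m : ℕ, (∑ j : Fin l.length,
          t ^ (N + 1 + m) / (Nat.factorial (N + 1 + m)) * hsymm (l ++ [l.get j]) m)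
        = t * (t ^ (N + m) / (Nat.factorial (N + m)) * hsymm l m) := by
      intro m
      rw [← Finset.mul_sum]
      have hk : ∑ j : Fin l.length, hsymm (l ++ [l.get j]) m
          = ((l.length : ℝ) + m) * hsymm l m := by
        simp_rw [hsymm_append_s7]
        exact key2 l.length m l.get
      rw [hk, hN]
      rw [show N + 1 + m = N + m + 1 from by omega]
      rw [pow_succ, Nat.factorial_succ]
      have h1 : ((Nat.factorial (N + m) : ℕ) : ℝ) ≠ 0 :=
        Nat.cast_ne_zero.mpr (Nat.factorial_ne_zero _)
      have h2 : ((N + m + 1 : ℕ) : ℝ) ≠ 0 := by positivity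
      push_cast
      field_simp
      ring
    rw [tsum_congr hpoint, tsum_mul_left]
    congr 1
    rw [dde, if_neg (by omega)]
    simp [hN]

/-- **Repeated-argument sum simplification** (Proposition 3): for every `q ≥ 0`, tuple
`(x_0, …, x_q)` and real `τ`, `Σ_{j=0}^{q} e^{-τ[x_0,…,x_q,x_j]} = −τ e^{-τ[x_0,…,x_q]}`. -/
theorem repeatedarg_sum (q : ℕ) (x : ℕ → ℝ) (τ : ℝ) :
    ∑ j ∈ Finset.range (q + 1), dde (-τ) (seg x 0 q ++ [x j])
      = -τ * dde (-τ) (seg x 0 q) := by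
  have hlen : (seg x 0 q).length = q + 1 := by simp [seg]
  have hget : ∀ j : Fin (seg x 0 q).length, (seg x 0 q).get j = x j := by
    intro j
    rw [List.get_eq_getElem]; simp [seg]
  calc ∑ j ∈ Finset.range (q + 1), dde (-τ) (seg x 0 q ++ [x j])
      = ∑ j : Fin (seg x 0 q).length, dde (-τ) (seg x 0 q ++ [x j]) := by
        rw [Fin.sum_univ_eq_sum_range (fun j => dde (-τ) (seg x 0 q ++ [x j]))
          (seg x 0 q).length, hlen]
    _ = ∑ j : Fin (seg x 0 q).length, dde (-τ) (seg x 0 q ++ [(seg x 0 q).get j]) :=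
        Finset.sum_congr rfl fun j _ => by rw [hget]
    _ = -τ * dde (-τ) (seg x 0 q) := main_list _ _
end

section
/- Weighted, repeated-argument, double, less-than sum simplification: for every integer q ≥ 0, every tuple (x_0, …, x_q) of real numbers and every real τ, one has Σ_{0 ≤ i ≤ j ≤ q} x_i · e^{-τ[x_0, …, x_q, x_i, x_j]} = −(τ²/2) · (∂/∂τ) e^{-τ[x_0, …, x_q]} − Σ_{i=0}^{q} i · (∂/∂x_i) e^{-τ[x_0, …, x_q]}, where (∂/∂x_i) e^{-τ[x_0, …, x_q]} denotes the derivative at y = x_i of the function y ↦ e^{-τ[x_0, …, x_{i−1}, y, x_{i+1}, …, x_q]}, and [x_0, …, x_q, x_i, x_j] denotes the tuple (x_0, …, x_q) with x_i and then x_j appended. -/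
open scoped BigOperators

/-! ### Auxiliary combinatorial lemmas about `hsymm` -/

noncomputable def H (n : ℕ) (v : Fin n → ℝ) (m : ℕ) : ℝ :=
  ∑ k ∈ Finset.Nat.antidiagonalTuple n m, ∏ i : Fin n, v i ^ k i

lemma hsymm_eq_H (l : List ℝ) (m : ℕ) : hsymm l m = H l.length l.get m := rfl

lemma cons_get (y : ℝ) (l : List ℝ) : (y :: l).get = Fin.cons y l.get := by
  funext i
  refine Fin.cases ?_ (fun j => ?_) i <;> simp

lemma hsymm_cons_H (y : ℝ) (l : List ℝ) (m : ℕ) :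
    hsymm (y :: l) m = H (l.length + 1) (Fin.cons y l.get) m := by
  rw [hsymm_eq_H, cons_get]; rfl

lemma H_cons (n : ℕ) (y : ℝ) (v : Fin n → ℝ) (m : ℕ) :
    H (n + 1) (Fin.cons y v) m = ∑ k ∈ Finset.range (m + 1), y ^ k * H n v (m - k) := by
  unfold H
  simp_rw [Finset.mul_sum]
  rw [Finset.sum_sigma']
  refine Finset.sum_nbij' (fun p => (⟨p 0, Fin.tail p⟩ : (_ : ℕ) × (Fin n → ℕ)))
    (fun p => Fin.cons p.1 p.2) ?_ ?_ ?_ ?_ ?_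
  · intro a ha
    rw [Finset.Nat.mem_antidiagonalTuple] at ha
    rw [Fin.sum_univ_succ] at ha
    simp only [Finset.mem_sigma, Finset.mem_range, Finset.Nat.mem_antidiagonalTuple, Fin.tail]
    omega
  · intro a ha
    rw [Finset.mem_sigma, Finset.mem_range, Finset.Nat.mem_antidiagonalTuple] at ha
    rw [Finset.Nat.mem_antidiagonalTuple, Fin.sum_univ_succ]
    simp only [Fin.cons_zero, Fin.cons_succ]
    omega
  · intro a _; exact Fin.cons_self_tail a
  · intro a _
    refine Sigma.ext ?_ (heq_of_eq ?_)
    · simp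
    · ext i; simp [Fin.tail]
  · intro a _
    rw [Fin.prod_univ_succ]
    simp [Fin.tail, mul_comm]

lemma hsymm_cons_s8 (y : ℝ) (l : List ℝ) (m : ℕ) :
    hsymm (y :: l) m = ∑ k ∈ Finset.range (m + 1), y ^ k * hsymm l (m - k) := by
  rw [hsymm_cons_H, H_cons]; rfl

lemma sum_triangle_step (m : ℕ) (f : ℕ → ℕ → ℝ) :
    ∑ k ∈ Finset.range (m+2), ∑ j ∈ Finset.range (m+2-k), f k j
      = (∑ k ∈ Finset.range (m+1), ∑ j ∈ Finset.range (m+1-k), f k j)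
        + ∑ k ∈ Finset.range (m+2), f k (m+1-k) := by
  rw [Finset.sum_range_succ, Finset.sum_range_succ (fun k => f k (m+1-k))]
  have h1 : ∀ k ∈ Finset.range (m+1), ∑ j ∈ Finset.range (m+2-k), f k j
      = (∑ j ∈ Finset.range (m+1-k), f k j) + f k (m+1-k) := by
    intro k hk
    rw [Finset.mem_range] at hk
    rw [show m+2-k = (m+1-k)+1 by omega, Finset.sum_range_succ]
  rw [Finset.sum_congr rfl h1, Finset.sum_add_distrib]
  have h2 : m+2-(m+1) = 1 := by omega
  rw [h2, Finset.sum_range_one]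
  have h3 : m+1-(m+1) = 0 := by omega
  rw [h3]
  ring

lemma sum_triangle_swap (m : ℕ) (f : ℕ → ℕ → ℝ) :
    ∑ k ∈ Finset.range (m+1), ∑ j ∈ Finset.range (m+1-k), f k j
      = ∑ j ∈ Finset.range (m+1), ∑ k ∈ Finset.range (m+1-j), f k j := by
  induction m with
  | zero => simp
  | succ m ih =>
    rw [show m+1+1 = m+2 from rfl, sum_triangle_step m f, sum_triangle_step m (fun a b => f b a),
      ih]
    congr 1
    have h := Finset.sum_range_reflect (fun j => f j (m+1-j)) (m+2)
    rw [← h]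
    refine Finset.sum_congr rfl fun j hj => ?_
    rw [Finset.mem_range] at hj
    congr 1 <;> omega

lemma sum_triangle_count (m : ℕ) (F : ℕ → ℝ) :
    ∑ k ∈ Finset.range (m+1), ∑ j ∈ Finset.range (m+1-k), F (k+j)
      = ∑ K ∈ Finset.range (m+1), (K+1 : ℝ) * F K := by
  induction m with
  | zero => simp
  | succ m ih =>
    rw [show m+1+1 = m+2 from rfl, sum_triangle_step m (fun k j => F (k+j)), ih,
      Finset.sum_range_succ (fun K => (K+1:ℝ) * F K) (m+1)]
    have h1 : ∀ k ∈ Finset.range (m+2), F (k + (m+1-k)) = F (m+1) := by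
      intro k hk
      rw [Finset.mem_range] at hk
      congr 1
      omega
    rw [Finset.sum_congr rfl h1, Finset.sum_const, Finset.card_range, nsmul_eq_mul]
    push_cast
    ring

lemma hsymm_cons_cons (u v : ℝ) (l : List ℝ) (m : ℕ) :
    hsymm (u :: v :: l) m
      = ∑ k ∈ Finset.range (m+1), ∑ j ∈ Finset.range (m+1-k),
          u ^ k * v ^ j * hsymm l (m - k - j) := by
  rw [hsymm_cons_s8]
  refine Finset.sum_congr rfl fun k hk => ?_
  rw [Finset.mem_range] at hk
  rw [hsymm_cons_s8, Finset.mul_sum, show m+1-k = (m-k)+1 by omega]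
  refine Finset.sum_congr rfl fun j hj => ?_
  ring

lemma hsymm_swap (u v : ℝ) (l : List ℝ) (m : ℕ) :
    hsymm (u :: v :: l) m = hsymm (v :: u :: l) m := by
  rw [hsymm_cons_cons, hsymm_cons_cons, sum_triangle_swap]
  refine Finset.sum_congr rfl fun j hj => Finset.sum_congr rfl fun k hk => ?_
  rw [Finset.mem_range] at hj hk
  rw [show m - k - j = m - j - k by omega]
  ring

lemma hsymm_perm {l l' : List ℝ} (h : l.Perm l') (m : ℕ) : hsymm l m = hsymm l' m := by
  induction h generalizing m with
  | nil => rfl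
  | cons a _ ih =>
    rw [hsymm_cons_s8, hsymm_cons_s8]
    exact Finset.sum_congr rfl fun k _ => by rw [ih]
  | swap a b l => exact hsymm_swap b a l m
  | trans _ _ ih1 ih2 => rw [ih1, ih2]

lemma hsymm_cons_cons_same (y : ℝ) (l : List ℝ) (m : ℕ) :
    hsymm (y :: y :: l) m
      = ∑ K ∈ Finset.range (m+1), (K+1 : ℝ) * (y ^ K * hsymm l (m - K)) := by
  rw [hsymm_cons_cons, ← sum_triangle_count m (fun K => y ^ K * hsymm l (m - K))]
  refine Finset.sum_congr rfl fun k hk => Finset.sum_congr rfl fun j hj => ?_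
  rw [Finset.mem_range] at hk hj
  rw [pow_add, show m - k - j = m - (k+j) by omega]
  try ring

lemma hsymm_cons_succ (y : ℝ) (l : List ℝ) (m : ℕ) :
    hsymm (y :: l) (m+1) = hsymm l (m+1) + y * hsymm (y :: l) m := by
  rw [hsymm_cons_s8 y l (m+1), Finset.sum_range_succ' _ (m+1)]
  simp only [pow_zero, one_mul, Nat.sub_zero]
  rw [hsymm_cons_s8 y l m, Finset.mul_sum, add_comm]
  congr 1
  refine Finset.sum_congr rfl fun k hk => ?_
  rw [Finset.mem_range] at hk
  rw [show m+1-(k+1) = m - k by omega]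
  ring

lemma sum_hsymm_cons_self (l : List ℝ) (m : ℕ) :
    ∑ i : Fin l.length, hsymm (l.get i :: l) m = ((l.length : ℝ) + m) * hsymm l m := by
  induction l generalizing m with
  | nil => simp [hsymm_nil]; rcases m with _|m <;> simp
  | cons y l ih =>
    show (∑ i : Fin (l.length + 1), hsymm ((y :: l).get i :: y :: l) m) = _
    rw [Fin.sum_univ_succ]
    have h0 : (y :: l).get (0 : Fin (l.length + 1)) = y := rfl
    have hs : ∀ i : Fin l.length, (y :: l).get i.succ = l.get i := fun i => rfl
    simp only [h0, hs]
    have h2 : ∀ i : Fin l.length, hsymm (l.get i :: y :: l) m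
        = ∑ k ∈ Finset.range (m+1), y ^ k * hsymm (l.get i :: l) (m - k) := by
      intro i
      rw [hsymm_swap, hsymm_cons_s8]
    simp only [h2]
    rw [Finset.sum_comm, hsymm_cons_cons_same]
    have h3 : ∀ k ∈ Finset.range (m+1),
        (∑ i : Fin l.length, y ^ k * hsymm (l.get i :: l) (m - k))
          = y ^ k * (((l.length : ℝ) + (m - k : ℕ)) * hsymm l (m - k)) := by
      intro k _
      rw [← Finset.mul_sum, ih]
    rw [Finset.sum_congr rfl h3, ← Finset.sum_add_distrib, hsymm_cons_s8, Finset.mul_sum]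
    refine Finset.sum_congr rfl fun k hk => ?_
    rw [Finset.mem_range] at hk
    have h4 : ((m - k : ℕ) : ℝ) = (m : ℝ) - k := by
      rw [Nat.cast_sub (by omega)]
    rw [h4]
    push_cast [List.length_cons]
    ring

lemma sum_hsymm_pair (l : List ℝ) (m : ℕ) (b : ℝ) :
    ∑ i : Fin l.length, hsymm (l.get i :: b :: l) m
      = ((l.length : ℝ) + 1 + m) * hsymm (b :: l) m - hsymm (b :: b :: l) m := by
  have hB := sum_hsymm_cons_self (b :: l) m
  have e : (∑ i : Fin (b :: l).length, hsymm ((b :: l).get i :: b :: l) m)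
      = ∑ i : Fin (l.length + 1), hsymm ((b :: l).get i :: b :: l) m := rfl
  rw [e, Fin.sum_univ_succ] at hB
  have h0 : (b :: l).get (0 : Fin (l.length + 1)) = b := rfl
  have hs : ∀ i : Fin l.length, (b :: l).get i.succ = l.get i := fun i => rfl
  simp only [h0, hs, List.length_cons] at hB
  push_cast at hB ⊢
  linarith

section Range
variable (q : ℕ) (x : ℕ → ℝ) (l : List ℝ) (m : ℕ)

lemma fin_to_range (hlen : l.length = q + 1)
    (hget : ∀ j : ℕ, j < q + 1 → l.getD j 0 = x j) (f : ℝ → ℝ) :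
    ∑ i : Fin l.length, f (l.get i) = ∑ i ∈ Finset.range (q + 1), f (x i) := by
  have e1 : ∑ i : Fin l.length, f (l.get i)
      = ∑ i : Fin l.length, (fun j => f (l.getD j 0)) i.val :=
    Finset.sum_congr rfl fun i _ => by
      show f (l.get i) = f (l.getD i.val 0)
      rw [List.getD_eq_getElem l 0 i.isLt, List.get_eq_getElem]
  rw [e1, Fin.sum_univ_eq_sum_range (fun j => f (l.getD j 0)) l.length]
  refine Finset.sum_congr (by rw [hlen]) fun j hj => ?_
  rw [Finset.mem_range] at hj
  rw [hget j hj]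

lemma range_B (hlen : l.length = q + 1) (hget : ∀ j : ℕ, j < q + 1 → l.getD j 0 = x j) :
    ∑ i ∈ Finset.range (q + 1), hsymm (x i :: l) m = ((q : ℝ) + 1 + m) * hsymm l m := by
  have h := sum_hsymm_cons_self l m
  rw [fin_to_range q x l hlen hget (fun b => hsymm (b :: l) m)] at h
  rw [h, hlen]
  push_cast
  ring

lemma range_pair (hlen : l.length = q + 1) (hget : ∀ j : ℕ, j < q + 1 → l.getD j 0 = x j)
    (b : ℝ) :
    ∑ i ∈ Finset.range (q + 1), hsymm (x i :: b :: l) m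
      = ((q : ℝ) + 2 + m) * hsymm (b :: l) m - hsymm (b :: b :: l) m := by
  have h := sum_hsymm_pair l m b
  rw [fin_to_range q x l hlen hget (fun a => hsymm (a :: b :: l) m)] at h
  rw [h, hlen]
  push_cast
  ring

lemma CI (hlen : l.length = q + 1) (hget : ∀ j : ℕ, j < q + 1 → l.getD j 0 = x j) :
    ∑ i ∈ Finset.range (q + 1), ∑ j ∈ Finset.Icc i q,
        (hsymm (x i :: x j :: l) m - hsymm (x j :: l) m)
      = ((q : ℝ) + 1 + m) * ((q : ℝ) + m) / 2 * hsymm l m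
        - ∑ i ∈ Finset.range (q + 1), (i : ℝ) * hsymm (x i :: l) m := by
  set r := Finset.range (q + 1) with hr
  set A : ℕ → ℕ → ℝ := fun i j => hsymm (x i :: x j :: l) m with hA
  set b : ℕ → ℝ := fun j => hsymm (x j :: l) m with hb
  have hIcc : ∀ i, Finset.Icc i q = r.filter (fun j => i ≤ j) := by
    intro i; ext j
    simp only [Finset.mem_Icc, Finset.mem_filter, Finset.mem_range, hr]
    omega
  have hsum1 : ∀ (F : ℕ → ℕ → ℝ), (∑ i ∈ r, ∑ j ∈ Finset.Icc i q, F i j)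
      = ∑ i ∈ r, ∑ j ∈ r, if i ≤ j then F i j else 0 := by
    intro F
    refine Finset.sum_congr rfl fun i _ => ?_
    rw [hIcc i, Finset.sum_filter]
  have hswap : ∀ i j, A i j = A j i := fun i j => hsymm_swap _ _ _ _
  have hBB : ∑ j ∈ r, b j = ((q : ℝ) + 1 + m) * hsymm l m := range_B q x l m hlen hget
  have h2 : (∑ i ∈ r, ∑ j ∈ r, if i ≤ j then A i j else 0)
        + (∑ i ∈ r, ∑ j ∈ r, if j ≤ i then A i j else 0)
      = (∑ i ∈ r, ∑ j ∈ r, A i j) + ∑ i ∈ r, A i i := by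
    rw [← Finset.sum_add_distrib, ← Finset.sum_add_distrib]
    simp_rw [← Finset.sum_add_distrib]
    have h2a : ∀ i ∈ r, ∑ j ∈ r, ((if i ≤ j then A i j else 0) + (if j ≤ i then A i j else 0))
        = ∑ j ∈ r, (A i j + if i = j then A i j else 0) := by
      intro i _
      refine Finset.sum_congr rfl fun j _ => ?_
      rcases lt_trichotomy i j with h | h | h
      · simp [le_of_lt h, not_le.2 h, h.ne]
      · subst h; simp
      · simp [le_of_lt h, not_le.2 h, h.ne']
    rw [Finset.sum_congr rfl h2a]
    refine Finset.sum_congr rfl fun i hi => ?_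
    rw [Finset.sum_add_distrib, Finset.sum_ite_eq r i (fun j => A i j), if_pos hi]
  have h3 : (∑ i ∈ r, ∑ j ∈ r, if j ≤ i then A i j else 0)
      = ∑ i ∈ r, ∑ j ∈ r, if i ≤ j then A i j else 0 := by
    rw [Finset.sum_comm]
    refine Finset.sum_congr rfl fun i _ => Finset.sum_congr rfl fun j _ => ?_
    by_cases h : i ≤ j <;> simp [h, hswap i j]
  have h4 : ∑ i ∈ r, ∑ j ∈ r, A i j
      = ((q : ℝ) + 2 + m) * (((q : ℝ) + 1 + m) * hsymm l m) - ∑ i ∈ r, A i i := by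
    rw [Finset.sum_comm]
    have hP : ∀ j ∈ r, ∑ i ∈ r, A i j = ((q : ℝ) + 2 + m) * b j - A j j := fun j _ =>
      range_pair q x l m hlen hget (x j)
    rw [Finset.sum_congr rfl hP, Finset.sum_sub_distrib, ← Finset.mul_sum, hBB]
  have key1 : (∑ i ∈ r, ∑ j ∈ r, if i ≤ j then A i j else 0)
      = ((q : ℝ) + 2 + m) * ((q : ℝ) + 1 + m) / 2 * hsymm l m := by
    rw [h3] at h2
    rw [h4] at h2
    linarith
  have key2 : (∑ i ∈ r, ∑ j ∈ r, if i ≤ j then b j else 0)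
      = ∑ j ∈ r, ((j : ℝ) + 1) * b j := by
    rw [Finset.sum_comm]
    refine Finset.sum_congr rfl fun j hj => ?_
    rw [Finset.mem_range] at hj
    rw [← Finset.sum_filter,
      show r.filter (fun i => i ≤ j) = Finset.range (j + 1) by
        ext a; simp only [Finset.mem_filter, Finset.mem_range, hr]; omega,
      Finset.sum_const, Finset.card_range, nsmul_eq_mul]
    push_cast
    ring
  rw [hsum1 (fun i j => A i j - b j)]
  have split : (∑ i ∈ r, ∑ j ∈ r, if i ≤ j then A i j - b j else 0)
      = (∑ i ∈ r, ∑ j ∈ r, if i ≤ j then A i j else 0)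
        - ∑ i ∈ r, ∑ j ∈ r, if i ≤ j then b j else 0 := by
    rw [← Finset.sum_sub_distrib]
    refine Finset.sum_congr rfl fun i _ => ?_
    rw [← Finset.sum_sub_distrib]
    refine Finset.sum_congr rfl fun j _ => ?_
    by_cases h : i ≤ j <;> simp [h]
  rw [split, key1, key2]
  have expand : ∑ j ∈ r, ((j : ℝ) + 1) * b j = (∑ j ∈ r, (j : ℝ) * b j) + ∑ j ∈ r, b j := by
    rw [← Finset.sum_add_distrib]
    exact Finset.sum_congr rfl fun j _ => by ring
  rw [expand, hBB]
  ring

end Range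

/-! ### Summability lemmas -/

lemma nat_pow_fact_le (j k : ℕ) : (k+1)^j * k.factorial ≤ (k+j).factorial := by
  induction j with
  | zero => simp
  | succ j ih =>
    calc (k+1)^(j+1) * k.factorial = (k+1) * ((k+1)^j * k.factorial) := by ring
    _ ≤ (k+1) * (k+j).factorial := Nat.mul_le_mul_left _ ih
    _ ≤ (k+j+1) * (k+j).factorial := Nat.mul_le_mul_right _ (by omega)
    _ = (k+j+1).factorial := rfl

lemma summable_master (j : ℕ) (r : ℝ) (hr : 0 ≤ r) :
    Summable (fun m : ℕ => (m+1 : ℝ)^j * r^m / m.factorial) := by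
  rw [← summable_nat_add_iff j]
  have hg : Summable (fun k : ℕ => ((j+1 : ℝ)^j * r^j) * (r^k / k.factorial)) :=
    (Real.summable_pow_div_factorial r).mul_left _
  refine Summable.of_nonneg_of_le (fun k => by positivity) (fun k => ?_) hg
  have h1 : ((k+j+1 : ℕ) : ℝ)^j ≤ (j+1 : ℝ)^j * (k+1 : ℝ)^j := by
    rw [← mul_pow]
    refine pow_le_pow_left₀ (by positivity) ?_ j
    push_cast
    nlinarith [Nat.cast_nonneg (α := ℝ) k, Nat.cast_nonneg (α := ℝ) j]
  have h2 : ((k+1 : ℝ))^j * (k.factorial : ℝ) ≤ ((k+j).factorial : ℝ) := by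
    exact_mod_cast Nat.cast_le.2 (nat_pow_fact_le j k)
  have hkf : (0:ℝ) < (k.factorial : ℝ) := by exact_mod_cast k.factorial_pos
  have hkjf : (0:ℝ) < ((k+j).factorial : ℝ) := by exact_mod_cast (k+j).factorial_pos
  calc ((k+j : ℕ)+1 : ℝ)^j * r^(k+j) / (k+j).factorial
      ≤ ((j+1 : ℝ)^j * (k+1 : ℝ)^j) * (r^j * r^k) / ((k+1 : ℝ)^j * k.factorial) := by
        have e : ((k+j : ℕ)+1 : ℝ) = ((k+j+1 : ℕ) : ℝ) := by push_cast; ring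
        rw [e, pow_add]
        apply div_le_div₀ (by positivity) ?_ (by positivity) h2
        calc ((k+j+1 : ℕ):ℝ)^j * (r^k * r^j)
            ≤ ((j+1 : ℝ)^j * (k+1 : ℝ)^j) * (r^k * r^j) :=
              mul_le_mul_of_nonneg_right h1 (by positivity)
        _ = ((j+1 : ℝ)^j * (k+1 : ℝ)^j) * (r^j * r^k) := by ring
  _ = ((j+1 : ℝ)^j * r^j) * (r^k / k.factorial) := by
        field_simp

lemma summable_of_le_master {f : ℕ → ℝ} (j : ℕ) (A r : ℝ) (hr : 0 ≤ r)
    (h : ∀ m, |f m| ≤ A * ((m+1 : ℝ)^j * r^m / m.factorial)) : Summable f := by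
  refine Summable.of_norm_bounded ((summable_master j r hr).mul_left A) (fun m => ?_)
  rw [Real.norm_eq_abs]
  exact h m

lemma hsymm_bound (l : List ℝ) (m : ℕ) (C : ℝ) (hC : 1 ≤ C)
    (h : ∀ i : Fin l.length, |l.get i| ≤ C) :
    |hsymm l m| ≤ ((m+1 : ℝ))^l.length * C^m := by
  have h0 : (0:ℝ) ≤ C := le_trans zero_le_one hC
  have hcard : ((Finset.Nat.antidiagonalTuple l.length m).card : ℝ) ≤ (m+1 : ℝ)^l.length := by
    have hsub : Finset.Nat.antidiagonalTuple l.length m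
        ⊆ Fintype.piFinset (fun _ : Fin l.length => Finset.range (m+1)) := by
      intro k hk
      rw [Finset.Nat.mem_antidiagonalTuple] at hk
      rw [Fintype.mem_piFinset]
      intro i
      rw [Finset.mem_range]
      have : k i ≤ ∑ j, k j := Finset.single_le_sum (fun j _ => Nat.zero_le _) (Finset.mem_univ i)
      omega
    have hle := Finset.card_le_card hsub
    rw [Fintype.card_piFinset] at hle
    simp only [Finset.card_range, Finset.prod_const, Finset.card_univ, Fintype.card_fin] at hle
    calc ((Finset.Nat.antidiagonalTuple l.length m).card : ℝ) ≤ (((m+1)^l.length : ℕ) : ℝ) := by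
          exact_mod_cast hle
    _ = (m+1 : ℝ)^l.length := by push_cast; ring
  calc |hsymm l m| ≤ ∑ k ∈ Finset.Nat.antidiagonalTuple l.length m, |∏ i, l.get i ^ k i| :=
        Finset.abs_sum_le_sum_abs _ _
  _ ≤ ∑ k ∈ Finset.Nat.antidiagonalTuple l.length m, C^m := by
      refine Finset.sum_le_sum fun k hk => ?_
      rw [Finset.abs_prod]
      calc ∏ i, |l.get i ^ k i| ≤ ∏ i, C ^ k i := by
            refine Finset.prod_le_prod (fun i _ => abs_nonneg _) (fun i _ => ?_)
            rw [abs_pow]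
            exact pow_le_pow_left₀ (abs_nonneg _) (h i) _
      _ = C ^ (∑ i, k i) := by rw [← Finset.prod_pow_eq_pow_sum]
      _ = C ^ m := by rw [Finset.Nat.mem_antidiagonalTuple.1 hk]
  _ = ((Finset.Nat.antidiagonalTuple l.length m).card : ℝ) * C^m := by
      rw [Finset.sum_const, nsmul_eq_mul]
  _ ≤ (m+1 : ℝ)^l.length * C^m := mul_le_mul_of_nonneg_right hcard (by positivity)

lemma exists_entry_bound (l : List ℝ) : ∃ C : ℝ, 1 ≤ C ∧ ∀ i : Fin l.length, |l.get i| ≤ C := by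
  induction l with
  | nil => exact ⟨1, le_refl _, fun i => i.elim0⟩
  | cons y l ih =>
    obtain ⟨C, hC, hb⟩ := ih
    refine ⟨max C |y|, le_trans hC (le_max_left _ _), fun i => ?_⟩
    refine Fin.cases ?_ (fun j => ?_) i
    · exact le_max_right _ _
    · exact le_trans (hb j) (le_max_left _ _)

/-- The coefficient `t^(K+m)/(K+m)!` of the DDE series. -/
noncomputable def cc (s : ℝ) (K m : ℕ) : ℝ := s ^ (K + m) / ((K + m).factorial : ℝ)

lemma cc_shift (s : ℝ) (q m : ℕ) : cc s (q+2) m = cc s (q+1) (m+1) := by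
  unfold cc
  rw [show q+2+m = q+1+(m+1) by omega]

lemma cc_shift1 (s : ℝ) (q m : ℕ) : cc s (q+1) m = cc s q (m+1) := by
  unfold cc
  rw [show q+1+m = q+(m+1) by omega]

lemma summable_dde_series (K : ℕ) (s : ℝ) (L : List ℝ) :
    Summable (fun m : ℕ => cc s K m * hsymm L m) := by
  obtain ⟨C, hC, hb⟩ := exists_entry_bound L
  refine summable_of_le_master L.length (|s|^K) (C * |s|) (by positivity) (fun m => ?_)
  have hfle : ((m.factorial : ℕ) : ℝ) ≤ (((K+m).factorial : ℕ) : ℝ) :=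
    Nat.cast_le.2 (Nat.factorial_le (Nat.le_add_left m K))
  have hfpos : (0:ℝ) < (m.factorial : ℝ) := by exact_mod_cast m.factorial_pos
  calc |cc s K m * hsymm L m|
      = |s|^K * |s|^m / ((K+m).factorial : ℝ) * |hsymm L m| := by
        rw [cc, abs_mul, abs_div, abs_pow, pow_add,
          abs_of_nonneg (by positivity : (0:ℝ) ≤ ((K+m).factorial : ℝ))]
  _ ≤ |s|^K * |s|^m / (m.factorial : ℝ) * ((m+1 : ℝ)^L.length * C^m) := by
        apply mul_le_mul ?_ (hsymm_bound L m C hC hb) (abs_nonneg _) (by positivity)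
        apply div_le_div₀ (by positivity) (le_refl _) hfpos hfle
  _ = |s|^K * ((m+1 : ℝ)^L.length * (C * |s|)^m / m.factorial) := by
        rw [mul_pow]
        field_simp

/-! ### Facts about `seg` and list updates -/

lemma seg_len (x : ℕ → ℝ) (q : ℕ) : (seg x 0 q).length = q + 1 := by simp [seg]

lemma seg_getD (x : ℕ → ℝ) (q j : ℕ) (hj : j < q + 1) : (seg x 0 q).getD j 0 = x j := by
  rw [List.getD_eq_getElem _ _ (by rw [seg_len]; omega)]
  simp [seg]

lemma seg_update_eq_set (x : ℕ → ℝ) (q i : ℕ) (hi : i < q + 1) (y : ℝ) :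
    seg (Function.update x i y) 0 q = (seg x 0 q).set i y := by
  apply List.ext_getElem
  · rw [List.length_set, seg_len, seg_len]
  · intro j h1 h2
    rw [List.getElem_set]
    have hj : j < q + 1 := by rw [seg_len] at h1; omega
    have e1 : ∀ (z : ℕ → ℝ), (seg z 0 q)[j]'(by rw [seg_len]; omega) = z j := by
      intro z; simp [seg]
    rw [e1]
    by_cases h : i = j
    · subst h; simp [Function.update_self]
    · rw [e1, Function.update_of_ne (by omega), if_neg h]

lemma set_perm : ∀ (l : List ℝ) (i : ℕ), i < l.length → ∀ (z : ℝ),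
    (l.set i z).Perm (z :: l.eraseIdx i) := by
  intro l
  induction l with
  | nil => intro i hi; simp at hi
  | cons y l ih =>
    intro i hi z
    rcases i with _ | i
    · simp
    · have hi' : i < l.length := by simpa using hi
      show ((y :: l.set i z)).Perm (z :: y :: l.eraseIdx i)
      exact (List.Perm.cons y (ih i hi' z)).trans (List.Perm.swap z y (l.eraseIdx i))

lemma dde_eq (t : ℝ) (L : List ℝ) (K : ℕ) (h : L.length = K + 1) :
    dde t L = ∑' m : ℕ, cc t K m * hsymm L m := by
  rw [dde, if_neg (by omega)]
  unfold cc
  simp [h]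

lemma hasDerivAt_hsymm_set (l : List ℝ) (i : ℕ) (hi : i < l.length) (m : ℕ) (y : ℝ) :
    HasDerivAt (fun z => hsymm (l.set i z) m)
      (if m = 0 then 0 else hsymm (y :: l.set i y) (m-1)) y := by
  set E := l.eraseIdx i with hE
  have hfun : ∀ z, hsymm (l.set i z) m
      = ∑ k ∈ Finset.range (m+1), z^k * hsymm E (m-k) := fun z => by
    rw [hsymm_perm (set_perm l i hi z), hsymm_cons_s8]
  have hD : HasDerivAt (fun z => ∑ k ∈ Finset.range (m+1), z^k * hsymm E (m-k))
      (∑ k ∈ Finset.range (m+1), ((k:ℝ) * y^(k-1)) * hsymm E (m-k)) y :=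
    HasDerivAt.fun_sum fun k _ => (hasDerivAt_pow k y).mul_const _
  have heq : (fun z => hsymm (l.set i z) m)
      = fun z => ∑ k ∈ Finset.range (m+1), z^k * hsymm E (m-k) := funext hfun
  rw [heq]
  convert hD using 1
  rcases m with _ | m
  · simp
  · rw [if_neg (by omega)]
    rw [Finset.sum_range_succ' (fun k => ((k:ℝ) * y^(k-1)) * hsymm E (m+1-k)) (m+1)]
    simp only [Nat.cast_zero, zero_mul, add_zero, Nat.add_sub_cancel]
    have hp : hsymm (y :: l.set i y) m = hsymm (y :: y :: E) m :=
      hsymm_perm (List.Perm.cons y (set_perm l i hi y)) m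
    rw [hp, hsymm_cons_cons_same]
    refine Finset.sum_congr rfl fun k hk => ?_
    rw [Finset.mem_range] at hk
    rw [show m+1-(k+1) = m-k by omega]
    push_cast
    ring

/-- Per-term identity matching the `τ`-derivative series with the target coefficients. -/
lemma coeff_id (q m : ℕ) (τ h : ℝ) :
    -(τ^2/2) * ((((q+m : ℕ) : ℝ) * (-τ)^(q+m-1) * -1) * (h / ((q+m).factorial : ℝ)))
      = cc (-τ) (q+1) m * (((q:ℝ)+1+m) * ((q:ℝ)+m)/2 * h) := by
  unfold cc
  rcases Nat.eq_zero_or_pos (q+m) with h0 | hpos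
  · obtain ⟨hq, hm⟩ : q = 0 ∧ m = 0 := by omega
    subst hq; subst hm
    norm_num
  · obtain ⟨p, hp⟩ : ∃ p, q + m = p + 1 := ⟨q+m-1, by omega⟩
    have e2 : ((q:ℝ) + (m:ℝ)) = (p:ℝ) + 1 := by exact_mod_cast hp
    have e3 : ((q:ℝ) + 1 + (m:ℝ)) = (p:ℝ) + 2 := by linarith
    have e4 : q+1+m = p+2 := by omega
    rw [hp, e4, e3, e2, show p+1-1 = p by omega, show p+2 = (p+1)+1 by omega,
      Nat.factorial_succ (p+1), Nat.factorial_succ p]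
    have hfact : ((p.factorial : ℕ):ℝ) ≠ 0 := by
      exact_mod_cast p.factorial_ne_zero
    push_cast
    field_simp
    ring

/-- **Weighted, repeated-argument, double, less-than sum simplification** (Lemma 3): for every
`q ≥ 0`, tuple `(x_0, …, x_q)` and real `τ`,
`Σ_{0≤i≤j≤q} x_i e^{-τ[x_0,…,x_q,x_i,x_j]}
  = (−(τ²/2) ∂/∂τ − Σ_{i=0}^q i ∂/∂x_i) e^{-τ[x_0,…,x_q]}`,
where `∂/∂x_i` is the derivative at `y = x_i` of `y ↦ e^{-τ[x_0,…,x_{i−1},y,x_{i+1},…,x_q]}`. -/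
theorem weighted_repeated_double_lessthan_sum (q : ℕ) (x : ℕ → ℝ) (τ : ℝ) :
    ∑ i ∈ Finset.range (q + 1), ∑ j ∈ Finset.Icc i q,
        x i * dde (-τ) (seg x 0 q ++ [x i, x j])
      = -(τ ^ 2 / 2) * deriv (fun t : ℝ => dde (-t) (seg x 0 q)) τ
        - ∑ i ∈ Finset.range (q + 1),
            (i : ℝ) * deriv (fun y : ℝ => dde (-τ) (seg (Function.update x i y) 0 q)) (x i) := by
  have hlen : (seg x 0 q).length = q + 1 := seg_len x q
  set l := seg x 0 q with hl
  have hget : ∀ j : ℕ, j < q + 1 → l.getD j 0 = x j := fun j hj => seg_getD x q j hj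
  obtain ⟨C0, hC0, hbl⟩ := exists_entry_bound l
  -- summabilities
  have hsumb : ∀ i : ℕ, Summable (fun m => cc (-τ) (q+1) m * hsymm (x i :: l) m) := fun i =>
    summable_dde_series (q+1) (-τ) (x i :: l)
  have hsumdiff : ∀ i j : ℕ,
      Summable (fun m => cc (-τ) (q+1) m * (hsymm (x i :: x j :: l) m - hsymm (x j :: l) m)) := by
    intro i j
    have h1 := summable_dde_series (q+1) (-τ) (x i :: x j :: l)
    have h2 := summable_dde_series (q+1) (-τ) (x j :: l)
    exact (h1.sub h2).congr fun m => by ring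
  -- LHS per-(i,j)
  have hLij : ∀ i j : ℕ, x i * dde (-τ) (l ++ [x i, x j])
      = ∑' m, cc (-τ) (q+1) m * (hsymm (x i :: x j :: l) m - hsymm (x j :: l) m) := by
    intro i j
    have hperm2 : (l ++ [x i, x j]).Perm (x i :: x j :: l) := List.perm_append_comm
    have hlen2 : (l ++ [x i, x j]).length = (q+2) + 1 := by
      rw [List.length_append, hlen, List.length_cons, List.length_cons, List.length_nil]
    rw [dde_eq (-τ) _ (q+2) hlen2]
    have e1 : (∑' m : ℕ, cc (-τ) (q+2) m * hsymm (l ++ [x i, x j]) m)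
        = ∑' m : ℕ, cc (-τ) (q+2) m * hsymm (x i :: x j :: l) m :=
      tsum_congr fun m => by rw [hsymm_perm hperm2]
    rw [e1, ← tsum_mul_left, Summable.tsum_eq_zero_add (hsumdiff i j)]
    have h0 : cc (-τ) (q+1) 0 * (hsymm (x i :: x j :: l) 0 - hsymm (x j :: l) 0) = 0 := by
      rw [hsymm_zero, hsymm_zero]; ring
    rw [h0, zero_add]
    refine tsum_congr fun m => ?_
    rw [hsymm_cons_succ (x i) (x j :: l) m, ← cc_shift (-τ) q m]
    ring
  -- LHS sum
  have hLHS : (∑ i ∈ Finset.range (q + 1), ∑ j ∈ Finset.Icc i q,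
        x i * dde (-τ) (l ++ [x i, x j]))
      = ∑' m, ∑ i ∈ Finset.range (q + 1), ∑ j ∈ Finset.Icc i q,
          cc (-τ) (q+1) m * (hsymm (x i :: x j :: l) m - hsymm (x j :: l) m) := by
    rw [Finset.sum_congr rfl fun i _ => Finset.sum_congr rfl fun j _ => hLij i j]
    rw [Finset.sum_congr rfl fun i _ => (Summable.tsum_finsetSum (fun j _ => hsumdiff i j)).symm]
    exact (Summable.tsum_finsetSum (fun i _ => summable_sum (fun j _ => hsumdiff i j))).symm
  -- RHS2 per-i derivative
  have hDi : ∀ i : ℕ, i < q + 1 →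
      deriv (fun y => dde (-τ) (seg (Function.update x i y) 0 q)) (x i)
        = ∑' m, cc (-τ) (q+1) m * hsymm (x i :: l) m := by
    intro i hi
    have hil : i < l.length := by rw [hlen]; omega
    have hsetself : l.set i (x i) = l := by
      rw [← seg_update_eq_set x q i hi (x i), Function.update_eq_self]
    set Ri : ℝ := |x i| + 1 with hRi
    set Ci : ℝ := max C0 Ri with hCi
    have hCi1 : 1 ≤ Ci := le_trans hC0 (le_max_left _ _)
    have hgm : ∀ (m : ℕ) (y : ℝ),
        HasDerivAt (fun z => cc (-τ) q m * hsymm (l.set i z) m)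
          (cc (-τ) q m * (if m = 0 then 0 else hsymm (y :: l.set i y) (m-1))) y :=
      fun m y => (hasDerivAt_hsymm_set l i hil m y).const_mul _
    have hbound : ∀ (m : ℕ) (y : ℝ), y ∈ Metric.ball (0:ℝ) Ri →
        ‖cc (-τ) q m * (if m = 0 then 0 else hsymm (y :: l.set i y) (m-1))‖
          ≤ (|τ|^q) * ((m+1 : ℝ)^(q+2) * ((Ci*|τ|))^m / m.factorial) := by
      intro m y hy
      have hyRi : |y| ≤ Ri := by
        rw [Metric.mem_ball, Real.dist_eq, sub_zero] at hy
        linarith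
      rcases m with _ | m
      · rw [if_pos rfl, mul_zero, norm_zero]
        positivity
      · rw [if_neg (Nat.succ_ne_zero m)]
        have hlset : (y :: l.set i y).length = q + 2 := by
          rw [List.length_cons, List.length_set, hlen]
        have hent : ∀ k : Fin (y :: l.set i y).length, |(y :: l.set i y).get k| ≤ Ci := by
          intro k
          refine Fin.cases ?_ (fun k' => ?_) k
          · show |y| ≤ Ci
            exact le_trans hyRi (le_max_right _ _)
          · show |(l.set i y).get k'| ≤ Ci
            rw [List.get_eq_getElem, List.getElem_set]
            by_cases h : i = k'.val
            · rw [if_pos h]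
              exact le_trans hyRi (le_max_right _ _)
            · rw [if_neg h]
              have hk' : k'.val < l.length :=
                lt_of_lt_of_le k'.isLt (le_of_eq (List.length_set (as := l) (i := i) (a := y)))
              exact le_trans (hbl ⟨k'.val, hk'⟩) (le_max_left _ _)
        have hb1 : |hsymm (y :: l.set i y) m| ≤ ((m+1 : ℝ))^(q+2) * Ci^m := by
          have := hsymm_bound (y :: l.set i y) m Ci hCi1 hent
          rwa [hlset] at this
        have hfle : ((m+1).factorial : ℝ) ≤ ((q+(m+1)).factorial : ℝ) :=
          Nat.cast_le.2 (Nat.factorial_le (Nat.le_add_left _ _))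
        have hf1pos : (0:ℝ) < ((m+1).factorial : ℝ) := by
          exact_mod_cast (m+1).factorial_pos
        have hCi0 : (0:ℝ) ≤ Ci := le_trans zero_le_one hCi1
        calc ‖cc (-τ) q (m+1) * hsymm (y :: l.set i y) (m+1-1)‖
            = |τ|^(q+(m+1)) / ((q+(m+1)).factorial : ℝ) * |hsymm (y :: l.set i y) m| := by
              rw [Nat.add_sub_cancel, cc, norm_mul, Real.norm_eq_abs, Real.norm_eq_abs,
                abs_div, abs_pow, abs_neg,
                abs_of_nonneg (by positivity : (0:ℝ) ≤ ((q+(m+1)).factorial : ℝ))]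
        _ ≤ |τ|^(q+(m+1)) / ((m+1).factorial : ℝ) * (((m+1 : ℝ))^(q+2) * Ci^m) := by
              apply mul_le_mul ?_ hb1 (abs_nonneg _) (by positivity)
              apply div_le_div₀ (by positivity) (le_refl _) hf1pos hfle
        _ ≤ |τ|^(q+(m+1)) / ((m+1).factorial : ℝ) * (((m+1+1 : ℝ))^(q+2) * Ci^(m+1)) := by
              apply mul_le_mul_of_nonneg_left ?_ (by positivity)
              apply mul_le_mul ?_ (pow_le_pow_right₀ hCi1 (Nat.le_succ m)) (by positivity)
                (by positivity)
              exact pow_le_pow_left₀ (by positivity) (by norm_num) _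
        _ = (|τ|^q) * ((m+1+1 : ℝ)^(q+2) * ((Ci*|τ|))^(m+1) / (m+1).factorial) := by
              rw [pow_add, mul_pow]
              field_simp
        _ = (|τ|^q) * (((m+1 : ℕ)+1 : ℝ)^(q+2) * ((Ci*|τ|))^(m+1) / ((m+1 : ℕ)).factorial) := by
              norm_num
    have hu : Summable (fun m : ℕ => (|τ|^q) * ((m+1 : ℝ)^(q+2) * ((Ci*|τ|))^m / m.factorial)) :=
      (summable_master (q+2) (Ci*|τ|) (by positivity)).mul_left _
    have hg0 : Summable (fun m => cc (-τ) q m * hsymm (l.set i (x i)) m) := by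
      simp only [hsetself]
      exact summable_dde_series q (-τ) l
    have hballmem : x i ∈ Metric.ball (0:ℝ) Ri := by
      rw [Metric.mem_ball, Real.dist_eq, sub_zero, hRi]
      linarith [abs_nonneg (x i)]
    have hDD := hasDerivAt_tsum_of_isPreconnected hu Metric.isOpen_ball
      (convex_ball (0:ℝ) Ri).isPreconnected (fun m y _ => hgm m y) hbound hballmem hg0 hballmem
    have hfeq : (fun y => dde (-τ) (seg (Function.update x i y) 0 q))
        = fun y => ∑' m, cc (-τ) q m * hsymm (l.set i y) m := by
      funext y
      rw [seg_update_eq_set x q i hi y, ← hl,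
        dde_eq (-τ) _ q (by rw [List.length_set, hlen])]
    rw [hfeq, hDD.deriv]
    have e3 : ∀ m : ℕ, cc (-τ) q m * (if m = 0 then 0 else hsymm (x i :: l.set i (x i)) (m-1))
        = cc (-τ) q m * (if m = 0 then 0 else hsymm (x i :: l) (m-1)) := fun m => by
      rw [hsetself]
    rw [tsum_congr e3]
    have hsum' : Summable
        (fun m => cc (-τ) q m * (if m = 0 then 0 else hsymm (x i :: l) (m-1))) := by
      rw [← summable_nat_add_iff 1]
      refine (summable_dde_series (q+1) (-τ) (x i :: l)).congr fun m => ?_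
      rw [if_neg (Nat.succ_ne_zero m), Nat.add_sub_cancel, cc_shift1]
    rw [Summable.tsum_eq_zero_add hsum']
    rw [if_pos rfl, mul_zero, zero_add]
    refine tsum_congr fun m => ?_
    rw [if_neg (Nat.succ_ne_zero m), Nat.add_sub_cancel, cc_shift1]
  -- RHS2 sum
  have hRHS2 : (∑ i ∈ Finset.range (q + 1),
        (i : ℝ) * deriv (fun y : ℝ => dde (-τ) (seg (Function.update x i y) 0 q)) (x i))
      = ∑' m, ∑ i ∈ Finset.range (q + 1), (i : ℝ) * (cc (-τ) (q+1) m * hsymm (x i :: l) m) := by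
    rw [Finset.sum_congr rfl fun i hi => by
      rw [hDi i (Finset.mem_range.1 hi), ← tsum_mul_left]]
    exact (Summable.tsum_finsetSum (fun i _ => (hsumb i).mul_left _)).symm
  -- RHS1
  set R : ℝ := |τ| + 1 with hR
  have hR1 : (1:ℝ) ≤ R := by rw [hR]; linarith [abs_nonneg τ]
  have hglob : ∀ (m : ℕ) (t : ℝ),
      HasDerivAt (fun t : ℝ => (-t)^(q+m) * (hsymm l m / ((q+m).factorial : ℝ)))
        ((((q+m : ℕ):ℝ) * (-t)^(q+m-1) * -1) * (hsymm l m / ((q+m).factorial : ℝ))) t := by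
    intro m t
    have h2 : HasDerivAt (fun u : ℝ => u^(q+m)) (((q+m:ℕ):ℝ) * (-t)^(q+m-1)) (-t) :=
      hasDerivAt_pow _ _
    exact (h2.comp t (hasDerivAt_neg t)).mul_const _
  have hbound1 : ∀ (m : ℕ) (t : ℝ), t ∈ Metric.ball (0:ℝ) R →
      ‖(((q+m : ℕ):ℝ) * (-t)^(q+m-1) * -1) * (hsymm l m / ((q+m).factorial : ℝ))‖
        ≤ ((q+1:ℝ) * R^q) * ((m+1 : ℝ)^(q+2) * ((C0*R))^m / m.factorial) := by
    intro m t ht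
    have htR : |t| ≤ R := by
      rw [Metric.mem_ball, Real.dist_eq, sub_zero] at ht
      linarith
    have hR0 : (0:ℝ) ≤ R := le_trans zero_le_one hR1
    have ht0 : (0:ℝ) ≤ |t| := abs_nonneg t
    have hb1 : |hsymm l m| ≤ ((m+1 : ℝ))^(q+1) * C0^m := by
      have := hsymm_bound l m C0 hC0 hbl
      rwa [hlen] at this
    have hfle : ((m.factorial : ℕ) : ℝ) ≤ (((q+m).factorial : ℕ) : ℝ) :=
      Nat.cast_le.2 (Nat.factorial_le (Nat.le_add_left m q))
    have hfpos : (0:ℝ) < (m.factorial : ℝ) := by exact_mod_cast m.factorial_pos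
    have habs : |t|^(q+m-1) ≤ R^(q+m) := by
      calc |t|^(q+m-1) ≤ R^(q+m-1) := pow_le_pow_left₀ ht0 htR _
      _ ≤ R^(q+m) := pow_le_pow_right₀ hR1 (by omega)
    calc ‖(((q+m : ℕ):ℝ) * (-t)^(q+m-1) * -1) * (hsymm l m / ((q+m).factorial : ℝ))‖
        = ((q+m : ℕ):ℝ) * |t|^(q+m-1) * (|hsymm l m| / ((q+m).factorial : ℝ)) := by
          rw [norm_mul, norm_mul, norm_mul, Real.norm_eq_abs, Real.norm_eq_abs,
            Real.norm_eq_abs, Real.norm_eq_abs, abs_div, abs_pow, abs_neg,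
            abs_of_nonneg (by positivity : (0:ℝ) ≤ ((q+m:ℕ):ℝ)),
            abs_of_nonneg (by positivity : (0:ℝ) ≤ (((q+m).factorial : ℕ):ℝ))]
          norm_num
    _ ≤ ((q+1:ℝ)*(m+1:ℝ)) * R^(q+m) * (((m+1 : ℝ))^(q+1) * C0^m / (m.factorial : ℝ)) := by
          apply mul_le_mul ?_ ?_ (by positivity) (by positivity)
          · apply mul_le_mul ?_ habs (by positivity) (by positivity)
            push_cast
            nlinarith [Nat.cast_nonneg (α := ℝ) q, Nat.cast_nonneg (α := ℝ) m]
          · apply div_le_div₀ (by positivity) hb1 hfpos hfle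
    _ = ((q+1:ℝ) * R^q) * ((m+1 : ℝ)^(q+2) * ((C0*R))^m / m.factorial) := by
          rw [pow_add, mul_pow, pow_succ]
          field_simp
          ring
  have hu1 : Summable
      (fun m : ℕ => ((q+1:ℝ) * R^q) * ((m+1 : ℝ)^(q+2) * ((C0*R))^m / m.factorial)) :=
    (summable_master (q+2) (C0*R) (by positivity)).mul_left _
  have hg01 : Summable (fun m => (-τ)^(q+m) * (hsymm l m / ((q+m).factorial : ℝ))) :=
    (summable_dde_series q (-τ) l).congr fun m => by rw [cc]; ring
  have hτball : τ ∈ Metric.ball (0:ℝ) R := by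
    rw [Metric.mem_ball, Real.dist_eq, sub_zero, hR]
    linarith
  have hDT := hasDerivAt_tsum_of_isPreconnected hu1 Metric.isOpen_ball
    (convex_ball (0:ℝ) R).isPreconnected (fun m t _ => hglob m t) hbound1 hτball hg01 hτball
  have hfeq1 : (fun t : ℝ => dde (-t) l)
      = fun t => ∑' m, (-t)^(q+m) * (hsymm l m / ((q+m).factorial : ℝ)) := by
    funext t
    rw [dde_eq (-t) l q hlen]
    exact tsum_congr fun m => by rw [cc]; ring
  have hRHS1 : -(τ^2/2) * deriv (fun t : ℝ => dde (-t) l) τ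
      = ∑' m, cc (-τ) (q+1) m * (((q:ℝ)+1+m) * ((q:ℝ)+m)/2 * hsymm l m) := by
    rw [hfeq1, hDT.deriv, ← tsum_mul_left]
    exact tsum_congr fun m => coeff_id q m τ (hsymm l m)
  -- key combination using CI
  have hsw : Summable (fun m => ∑ i ∈ Finset.range (q + 1), ∑ j ∈ Finset.Icc i q,
      cc (-τ) (q+1) m * (hsymm (x i :: x j :: l) m - hsymm (x j :: l) m)) :=
    summable_sum (fun i _ => summable_sum (fun j _ => hsumdiff i j))
  have hsb2 : Summable (fun m => ∑ i ∈ Finset.range (q + 1),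
      (i : ℝ) * (cc (-τ) (q+1) m * hsymm (x i :: l) m)) :=
    summable_sum (fun i _ => (hsumb i).mul_left _)
  have hkey : (∑' m, cc (-τ) (q+1) m * (((q:ℝ)+1+m) * ((q:ℝ)+m)/2 * hsymm l m))
      = (∑' m, ∑ i ∈ Finset.range (q + 1), ∑ j ∈ Finset.Icc i q,
          cc (-τ) (q+1) m * (hsymm (x i :: x j :: l) m - hsymm (x j :: l) m))
        + ∑' m, ∑ i ∈ Finset.range (q + 1),
            (i : ℝ) * (cc (-τ) (q+1) m * hsymm (x i :: l) m) := by
    rw [← Summable.tsum_add hsw hsb2]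
    refine tsum_congr fun m => ?_
    have hCI := CI q x l m hlen hget
    have e5 : (∑ i ∈ Finset.range (q + 1), ∑ j ∈ Finset.Icc i q,
        cc (-τ) (q+1) m * (hsymm (x i :: x j :: l) m - hsymm (x j :: l) m))
        = cc (-τ) (q+1) m * ∑ i ∈ Finset.range (q + 1), ∑ j ∈ Finset.Icc i q,
            (hsymm (x i :: x j :: l) m - hsymm (x j :: l) m) := by
      simp only [Finset.mul_sum]
    have e6 : (∑ i ∈ Finset.range (q + 1), (i : ℝ) * (cc (-τ) (q+1) m * hsymm (x i :: l) m))
        = cc (-τ) (q+1) m * ∑ i ∈ Finset.range (q + 1), (i : ℝ) * hsymm (x i :: l) m := by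
      rw [Finset.mul_sum]
      exact Finset.sum_congr rfl fun i _ => by ring
    rw [e5, e6, hCI]
    ring
  rw [hLHS, hRHS2]
  rw [hRHS1]
  linarith [hkey]
end
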